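/- arXiv:1305.6376 — 4 statements merged into one kernel-verified Lean document; each statement's English description precedes it below -/
import Mathlib

section
/- For every black pebbling of the balanced binary tree of height h ≥ 2 that starts with no pebbles, ends with no pebbles, and at some time has a pebble on the root, there exists a time t at which the total number of pebbles on the tree is at least h. -/
/-- Number of nodes of the complete d-ary tree of height h (levels 0..h-1). -/
def treeSize (d h : ℕ) : ℕ := ∑ k ∈ Finset.range h, d ^ k

/-- A black pebble configuration: heap-indexed nodes, node 0 is the root. -/
abbrev BCfg := ℕ → Bool

/-- j is a child of i in heap indexing of the d-ary tree. -/
def child (d i j : ℕ) : Prop := ∃ k, k < d ∧ j = d * i + 1 + k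

/-- i is a leaf of the tree with n nodes. -/
def isLeaf (d n i : ℕ) : Prop := i < n ∧ n ≤ d * i + 1

/-- Weight of a configuration: number of pebbles on the tree. -/
def bweight (n : ℕ) (c : BCfg) : ℕ := ∑ i ∈ Finset.range n, (if c i then 1 else 0)

/-- All children of i are pebbled. -/
def bcovered (d : ℕ) (c : BCfg) (i : ℕ) : Prop := ∀ j, child d i j → c j = true

/-- A legal black pebbling move: remove a pebble; place a pebble on a node whose
children are all pebbled, optionally simultaneously removing pebbles from any
children (sliding move); or place a pebble on a leaf. -/
def BMove (d n : ℕ) (c c' : BCfg) : Prop :=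
  (∃ i, c' = Function.update c i false) ∨
  (∃ i, i < n ∧ bcovered d c i ∧ c' i = true ∧
     ∀ j, j ≠ i → (c' j = c j ∨ (child d i j ∧ c' j = false))) ∨
  (∃ i, isLeaf d n i ∧ c' = Function.update c i true)

/-- A black pebbling: a sequence of configurations connected by legal moves. -/
def BPebbling (d n T : ℕ) (c : ℕ → BCfg) : Prop := ∀ t, t < T → BMove d n (c t) (c (t + 1))

def BEmpty (c : BCfg) : Prop := ∀ i, c i = false

/-- A root-pebbling: starts and ends empty, and at some time the root (node 0) is pebbled. -/
def BRootPebbling (d n T : ℕ) (c : ℕ → BCfg) : Prop :=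
  BPebbling d n T c ∧ BEmpty (c 0) ∧ BEmpty (c T) ∧ ∃ t, t ≤ T ∧ c t 0 = true

/- auxiliary development -/

def par (i : ℕ) : ℕ := (i - 1) / 2

def anc (v i : ℕ) : Prop := ∃ e, par^[e] i = v

lemma par_le (i : ℕ) : par i ≤ i := by unfold par; omega

lemma par_iter_le (e i : ℕ) : par^[e] i ≤ i := by
  induction e with
  | zero => simp
  | succ e ih =>
    rw [Function.iterate_succ_apply']
    exact (par_le _).trans ih

lemma par_left (v : ℕ) : par (2 * v + 1) = v := by unfold par; omega
lemma par_right (v : ℕ) : par (2 * v + 2) = v := by unfold par; omega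

lemma anc_self (v : ℕ) : anc v v := ⟨0, rfl⟩

lemma anc_left {v i : ℕ} (h : anc (2 * v + 1) i) : anc v i := by
  obtain ⟨e, he⟩ := h
  exact ⟨e + 1, by rw [Function.iterate_succ_apply', he, par_left]⟩

lemma anc_right {v i : ℕ} (h : anc (2 * v + 2) i) : anc v i := by
  obtain ⟨e, he⟩ := h
  exact ⟨e + 1, by rw [Function.iterate_succ_apply', he, par_right]⟩

lemma anc_sib {v i : ℕ} (h1 : anc (2 * v + 1) i) (h2 : anc (2 * v + 2) i) : False := by
  obtain ⟨e, he⟩ := h1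
  obtain ⟨f, hf⟩ := h2
  rcases lt_trichotomy e f with h | h | h
  · obtain ⟨g, rfl⟩ : ∃ g, f = g + 1 + e := ⟨f - e - 1, by omega⟩
    rw [Function.iterate_add_apply, he, Function.iterate_add_apply,
      Function.iterate_one, par_left] at hf
    have := par_iter_le g v
    omega
  · subst h; rw [he] at hf; omega
  · obtain ⟨g, rfl⟩ : ∃ g, e = g + 1 + f := ⟨e - f - 1, by omega⟩
    rw [Function.iterate_add_apply, hf, Function.iterate_add_apply,
      Function.iterate_one, par_right] at he
    have := par_iter_le g v
    omega

open Classical in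
noncomputable def Ssub (n v : ℕ) (cfg : BCfg) : Finset ℕ :=
  (Finset.range n).filter (fun i => anc v i ∧ cfg i = true)

lemma mem_Ssub {n v i : ℕ} {cfg : BCfg} :
    i ∈ Ssub n v cfg ↔ i < n ∧ anc v i ∧ cfg i = true := by
  classical
  simp [Ssub, Finset.mem_filter, Finset.mem_range]

lemma Ssub_card_add {n v : ℕ} {cfg : BCfg} :
    (Ssub n (2 * v + 1) cfg).card + (Ssub n (2 * v + 2) cfg).card
      ≤ (Ssub n v cfg).card := by
  classical
  have hdisj : Disjoint (Ssub n (2 * v + 1) cfg) (Ssub n (2 * v + 2) cfg) := by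
    rw [Finset.disjoint_left]
    intro i h1 h2
    exact anc_sib (mem_Ssub.mp h1).2.1 (mem_Ssub.mp h2).2.1
  rw [← Finset.card_union_of_disjoint hdisj]
  apply Finset.card_le_card
  intro i hi
  rcases Finset.mem_union.mp hi with h | h
  · obtain ⟨h1, h2, h3⟩ := mem_Ssub.mp h
    exact mem_Ssub.mpr ⟨h1, anc_left h2, h3⟩
  · obtain ⟨h1, h2, h3⟩ := mem_Ssub.mp h
    exact mem_Ssub.mpr ⟨h1, anc_right h2, h3⟩

lemma Ssub_card_le_bweight {n v : ℕ} {cfg : BCfg} :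
    (Ssub n v cfg).card ≤ bweight n cfg := by
  classical
  have : bweight n cfg = ((Finset.range n).filter (fun i => cfg i = true)).card := by
    rw [Finset.card_filter]
    apply Finset.sum_congr rfl
    intro i _
    by_cases h : cfg i = true <;> simp [h]
  rw [this]
  apply Finset.card_le_card
  intro i hi
  obtain ⟨h1, _, h3⟩ := mem_Ssub.mp hi
  exact Finset.mem_filter.mpr ⟨Finset.mem_range.mpr h1, h3⟩

lemma treeSize_two (h : ℕ) : treeSize 2 h + 1 = 2 ^ h := by
  induction h with
  | zero => simp [treeSize]
  | succ h ih =>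
    unfold treeSize at *
    rw [Finset.sum_range_succ, pow_succ]
    omega

lemma key (n T : ℕ) (c : ℕ → BCfg) (hp : BPebbling 2 n T c) (k : ℕ) :
    ∀ v t0 t1, 2 ^ k * (v + 2) ≤ n + 1 →
      (∀ i, anc v i → i < n → c t0 i = false) →
      t0 ≤ t1 → t1 ≤ T → c t1 v = true →
      ∃ t, t0 ≤ t ∧ t ≤ t1 ∧ k + 1 ≤ (Ssub n v (c t)).card := by
  classical
  induction k with
  | zero =>
    intro v t0 t1 hfit _ h01 _ hv
    refine ⟨t1, h01, le_refl _, ?_⟩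
    have hvn : v < n := by simp at hfit; omega
    exact Finset.card_pos.mpr ⟨v, mem_Ssub.mpr ⟨hvn, anc_self v, hv⟩⟩
  | succ k IH =>
    intro v t0 t1 hfit hemp h01 h1T hv
    have hk1 : 2 * (v + 2) ≤ n + 1 := by
      calc 2 * (v + 2) ≤ 2 ^ (k + 1) * (v + 2) := by
            apply Nat.mul_le_mul_right
            have : 2 ^ 1 ≤ 2 ^ (k + 1) := Nat.pow_le_pow_right (by norm_num) (by omega)
            simpa using this
        _ ≤ n + 1 := hfit
    have hvn : 2 * v + 3 ≤ n := by omega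
    have hv0 : c t0 v = false := hemp v (anc_self v) (by omega)
    -- first pebbling time of v in [t0, t1]
    set A : Finset ℕ := (Finset.Icc t0 t1).filter (fun u => c u v = true) with hA
    have hAne : A.Nonempty := ⟨t1, by simp [hA, Finset.mem_filter, Finset.mem_Icc, h01, hv]⟩
    set t := A.min' hAne with htdef
    have htA : t ∈ A := A.min'_mem hAne
    have htv : c t v = true := (Finset.mem_filter.mp htA).2
    have ht01 : t0 ≤ t ∧ t ≤ t1 := Finset.mem_Icc.mp (Finset.mem_filter.mp htA).1
    have ht0lt : t0 < t := by
      rcases Nat.lt_or_ge t0 t with h | h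
      · exact h
      · have : t = t0 := by omega
        rw [this] at htv; rw [hv0] at htv; exact absurd htv (by simp)
    have htprev : c (t - 1) v = false := by
      by_contra hcon
      have h1 : t - 1 ∈ A := by
        refine Finset.mem_filter.mpr ⟨Finset.mem_Icc.mpr ⟨by omega, by omega⟩, ?_⟩
        simpa using hcon
      have := A.min'_le _ h1
      omega
    have htT : t - 1 < T := by omega
    have hmove := hp (t - 1) htT
    rw [show t - 1 + 1 = t by omega] at hmove
    -- analyze the move: both children of v pebbled at t-1
    have hchil : c (t - 1) (2 * v + 1) = true ∧ c (t - 1) (2 * v + 2) = true := by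
      rcases hmove with ⟨i, hup⟩ | ⟨i, _, hcov, hci, hrest⟩ | ⟨i, hleaf, hup⟩
      · rw [hup] at htv
        rcases eq_or_ne v i with rfl | hne
        · simp at htv
        · rw [Function.update_of_ne hne] at htv
          rw [htprev] at htv; exact absurd htv (by simp)
      · rcases eq_or_ne v i with rfl | hne
        · constructor
          · exact hcov (2 * v + 1) ⟨0, by omega, by omega⟩
          · exact hcov (2 * v + 2) ⟨1, by omega, by omega⟩
        · rcases hrest v hne with h | ⟨_, h⟩ <;>
            (rw [h] at htv; first | (rw [htprev] at htv; exact absurd htv (by simp)) |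
              exact absurd htv (by simp))
      · rcases eq_or_ne v i with rfl | hne
        · exact absurd hleaf.2 (by omega)
        · rw [hup, Function.update_of_ne hne, htprev] at htv
          exact absurd htv (by simp)
    -- last empty times for each child subtree
    have hsetup : ∀ w, (∀ i, anc w i → anc v i) →
        ∃ r, t0 ≤ r ∧ r ≤ t - 1 ∧ (∀ i, anc w i → i < n → c r i = false) ∧
          (∀ u, r < u → u ≤ t - 1 → ¬ (∀ i, anc w i → i < n → c u i = false)) := by
      intro w hanc
      set B : Finset ℕ :=
        (Finset.Icc t0 (t - 1)).filter (fun u => ∀ i, anc w i → i < n → c u i = false) with hB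
      have hBne : B.Nonempty := by
        refine ⟨t0, Finset.mem_filter.mpr ⟨Finset.mem_Icc.mpr ⟨le_refl _, by omega⟩, ?_⟩⟩
        intro i hi hin
        exact hemp i (hanc i hi) hin
      refine ⟨B.max' hBne, ?_, ?_, ?_, ?_⟩
      · exact (Finset.mem_Icc.mp (Finset.mem_filter.mp (B.max'_mem hBne)).1).1
      · exact (Finset.mem_Icc.mp (Finset.mem_filter.mp (B.max'_mem hBne)).1).2
      · exact (Finset.mem_filter.mp (B.max'_mem hBne)).2
      · intro u h1 h2 hcon
        have hu : u ∈ B := by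
          refine Finset.mem_filter.mpr ⟨Finset.mem_Icc.mpr ⟨?_, h2⟩, hcon⟩
        -- t0 ≤ u
          have := (Finset.mem_Icc.mp (Finset.mem_filter.mp (B.max'_mem hBne)).1).1
          omega
        have := B.le_max' u hu
        omega
    obtain ⟨r1, hr1a, hr1b, hr1emp, hr1max⟩ := hsetup (2 * v + 1) (fun i => anc_left)
    obtain ⟨r2, hr2a, hr2b, hr2emp, hr2max⟩ := hsetup (2 * v + 2) (fun i => anc_right)
    -- the generic finishing argument
    have FIN : ∀ wb wo rb ro,
        2 ^ k * (wb + 2) ≤ n + 1 →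
        (∀ i, anc wb i → i < n → c rb i = false) →
        t0 ≤ rb → rb ≤ t - 1 → c (t - 1) wb = true →
        ro ≤ rb →
        (∀ u, ro < u → u ≤ t - 1 → ¬ (∀ i, anc wo i → i < n → c u i = false)) →
        (∀ u, (Ssub n wb (c u)).card + (Ssub n wo (c u)).card ≤ (Ssub n v (c u)).card) →
        ∃ s, t0 ≤ s ∧ s ≤ t1 ∧ k + 1 + 1 ≤ (Ssub n v (c s)).card := by
      intro wb wo rb ro hfitb hempb hrb1 hrb2 hcb hro hmaxo hcomb
      obtain ⟨s, hs1, hs2, hcard⟩ := IH wb rb (t - 1) hfitb hempb hrb2 (by omega) hcb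
      have hne : (Ssub n wb (c s)).Nonempty := Finset.card_pos.mp (by omega)
      have hs_ro : ro < s := by
        by_contra hcon
        push_neg at hcon
        have hsr : s = rb := by omega
        obtain ⟨i, hi⟩ := hne
        obtain ⟨h1, h2, h3⟩ := mem_Ssub.mp hi
        rw [hsr, hempb i h2 h1] at h3
        exact absurd h3 (by simp)
      have hx := hmaxo s hs_ro hs2
      push_neg at hx
      obtain ⟨i, hi1, hi2, hi3⟩ := hx
      have hio : i ∈ Ssub n wo (c s) := mem_Ssub.mpr ⟨hi2, hi1, by simpa using hi3⟩
      have h1 : 1 ≤ (Ssub n wo (c s)).card := Finset.card_pos.mpr ⟨i, hio⟩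
      refine ⟨s, by omega, by omega, ?_⟩
      have := hcomb s
      omega
    have hfit1 : 2 ^ k * (2 * v + 1 + 2) ≤ n + 1 := by
      calc 2 ^ k * (2 * v + 1 + 2) ≤ 2 ^ k * (2 * (v + 2)) :=
            Nat.mul_le_mul_left _ (by omega)
        _ = 2 ^ (k + 1) * (v + 2) := by ring
        _ ≤ n + 1 := hfit
    have hfit2 : 2 ^ k * (2 * v + 2 + 2) ≤ n + 1 := by
      calc 2 ^ k * (2 * v + 2 + 2) = 2 ^ (k + 1) * (v + 2) := by ring
        _ ≤ n + 1 := hfit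
    rcases le_total r1 r2 with hle | hle
    · exact FIN (2 * v + 2) (2 * v + 1) r2 r1 hfit2 hr2emp hr2a hr2b hchil.2 hle hr1max
        (fun u => by have := Ssub_card_add (n := n) (v := v) (cfg := c u); omega)
    · exact FIN (2 * v + 1) (2 * v + 2) r1 r2 hfit1 hr1emp hr1a hr1b hchil.1 hle hr2max
        (fun u => Ssub_card_add)

/-- every black root-pebbling of the binary tree of height h ≥ 2
uses at least h pebbles at some time. -/
theorem black_lower_binary (h : ℕ) (hh : 2 ≤ h) (T : ℕ) (c : ℕ → BCfg)
    (hp : BRootPebbling 2 (treeSize 2 h) T c) :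
    ∃ t, t ≤ T ∧ h ≤ bweight (treeSize 2 h) (c t) := by
  obtain ⟨hpeb, h0, _, t1, ht1, hroot⟩ := hp
  have hn : treeSize 2 h + 1 = 2 ^ h := treeSize_two h
  have hfit : 2 ^ (h - 1) * (0 + 2) ≤ treeSize 2 h + 1 := by
    have : 2 ^ (h - 1) * (0 + 2) = 2 ^ h := by
      rw [show (0 : ℕ) + 2 = 2 from rfl, ← pow_succ, show h - 1 + 1 = h by omega]
    omega
  obtain ⟨t, _, ht1', hcard⟩ := key (treeSize 2 h) T c hpeb (h - 1) 0 0 t1 hfit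
    (fun i _ _ => h0 i) (Nat.zero_le _) ht1 hroot
  refine ⟨t, le_trans ht1' ht1, ?_⟩
  have := Ssub_card_le_bweight (n := treeSize 2 h) (v := 0) (cfg := c t)
  omega
end

section
/- For every black pebbling of the balanced d-ary tree of height h ≥ 2 (d ≥ 2) that starts with no pebbles, ends with no pebbles, and at some time has a pebble on the root, there is a time at which the number of pebbles on the tree is at least (d−1)·(h−1)+1. -/
namespace BlackAux

/-- Nodes of the subtree of height g rooted at v, in heap indexing. -/
def sub (d v g : ℕ) : Finset ℕ :=
  (Finset.range g).biUnion fun j =>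
    Finset.Ico (d ^ j * v + treeSize d j) (d ^ j * v + treeSize d j + d ^ j)

lemma treeSize_succ (d g : ℕ) : treeSize d (g+1) = treeSize d g + d ^ g := by
  simp [treeSize, Finset.sum_range_succ]

lemma treeSize_mono (d : ℕ) {j1 j2 : ℕ} (h : j1 ≤ j2) : treeSize d j1 ≤ treeSize d j2 := by
  unfold treeSize
  exact Finset.sum_le_sum_of_subset (Finset.range_subset_range.2 h)

lemma mem_sub {d v g x : ℕ} : x ∈ sub d v g ↔
    ∃ j < g, d ^ j * v + treeSize d j ≤ x ∧ x < d ^ j * v + treeSize d j + d ^ j := by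
  simp [sub, Finset.mem_biUnion, Finset.mem_Ico]

lemma self_mem_sub {d v g : ℕ} (hg : 0 < g) : v ∈ sub d v g := by
  rw [mem_sub]
  exact ⟨0, hg, by simp [treeSize]⟩

lemma le_of_mem_sub {d v g x : ℕ} (hd : 1 ≤ d) (hx : x ∈ sub d v g) : v ≤ x := by
  rw [mem_sub] at hx
  obtain ⟨j, _, h1, _⟩ := hx
  have : v ≤ d ^ j * v := Nat.le_mul_of_pos_left v (Nat.pow_pos hd)
  omega

lemma sub_succ (d v g : ℕ) (hd : 1 ≤ d) :
    sub d v (g+1) = insert v ((Finset.range d).biUnion fun k => sub d (d*v+1+k) g) := by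
  ext x
  simp only [mem_sub, Finset.mem_insert, Finset.mem_biUnion, Finset.mem_range]
  constructor
  · rintro ⟨j, hj, h1, h2⟩
    cases j with
    | zero =>
      left; simp only [pow_zero, one_mul, treeSize] at h1 h2; simp at h1 h2; omega
    | succ j =>
      right
      have hpos : 0 < d ^ j := Nat.pow_pos hd
      obtain ⟨y, rfl⟩ := Nat.exists_eq_add_of_le h1
      set s := d ^ (j+1) * v + treeSize d (j+1) with hs
      have hy : y < d ^ j * d := by
        have : d ^ (j+1) = d ^ j * d := pow_succ d j
        omega
      refine ⟨y / d ^ j, ?_, j, by omega, ?_, ?_⟩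
      · exact Nat.div_lt_of_lt_mul hy
      all_goals {
        have hkey : d ^ j * (d*v+1+ y / d ^ j) + treeSize d j
            = s + d ^ j * (y / d ^ j) := by
          rw [hs, treeSize_succ, pow_succ]; ring
        have h3 : d ^ j * (y / d ^ j) ≤ y := Nat.mul_div_le y (d ^ j) |>.trans_eq rfl
        have h4 : y < d ^ j * (y / d ^ j) + d ^ j := by
          have e1 := Nat.div_add_mod y (d ^ j)
          have e2 := Nat.mod_lt y hpos
          omega
        omega
      }
  · rintro (rfl | ⟨k, hk, j, hj, h1, h2⟩)
    · exact ⟨0, by omega, by simp [treeSize]⟩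
    · refine ⟨j+1, by omega, ?_, ?_⟩ <;>
      · have hkey : d ^ j * (d*v+1+k) + treeSize d j
            = d ^ (j+1) * v + treeSize d (j+1) + d ^ j * k := by
          rw [treeSize_succ, pow_succ]; ring
        have hle : d ^ j * k + d ^ j ≤ d ^ j * d := by
          have : d ^ j * (k+1) ≤ d ^ j * d := Nat.mul_le_mul_left _ (by omega)
          nlinarith
        have : d ^ (j+1) = d ^ j * d := pow_succ d j
        omega

lemma sub_disjoint {d g v1 v2 : ℕ} (hd : 2 ≤ d) (h1 : 1 ≤ v1) (h12 : v1 < v2)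
    (h2 : v2 ≤ v1 + (d-1)) : Disjoint (sub d v1 g) (sub d v2 g) := by
  rw [Finset.disjoint_left]
  intro x hx1 hx2
  rw [mem_sub] at hx1 hx2
  obtain ⟨j1, _, a1, b1⟩ := hx1
  obtain ⟨j2, _, a2, b2⟩ := hx2
  rcases lt_trichotomy j1 j2 with h | rfl | h
  · -- j1 < j2
    have hE : treeSize d j1 ≤ treeSize d j2 := treeSize_mono d (by omega)
    have hA : d ^ j1 * (v1+1) ≤ d ^ j1 * (d * v2) := by
      refine Nat.mul_le_mul_left _ ?_
      have : 2 * v2 ≤ d * v2 := Nat.mul_le_mul_right _ hd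
      omega
    have hB : d ^ j1 * (d * v2) = d ^ (j1+1) * v2 := by rw [pow_succ]; ring
    have hC : d ^ (j1+1) * v2 ≤ d ^ j2 * v2 :=
      Nat.mul_le_mul_right _ (Nat.pow_le_pow_right (by omega) (by omega))
    have hD : d ^ j1 * (v1+1) = d ^ j1 * v1 + d ^ j1 := by ring
    omega
  · -- j1 = j2
    have hA : d ^ j1 * (v1+1) ≤ d ^ j1 * v2 := Nat.mul_le_mul_left _ (by omega)
    have hD : d ^ j1 * (v1+1) = d ^ j1 * v1 + d ^ j1 := by ring
    omega
  · -- j2 < j1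
    have hE : treeSize d j2 + d ^ j2 ≤ treeSize d j1 := by
      have := treeSize_mono d (show j2 + 1 ≤ j1 by omega)
      rw [treeSize_succ] at this; omega
    have hA : d ^ j2 * v2 ≤ d ^ j2 * (d * v1) := by
      refine Nat.mul_le_mul_left _ ?_
      have h3 : (d-1) * 1 ≤ (d-1) * v1 := Nat.mul_le_mul_left _ h1
      have h4 : d * v1 = (d-1) * v1 + v1 := by
        have hdd : d = (d-1) + 1 := by omega
        nth_rewrite 1 [hdd]; rw [Nat.succ_mul]
      omega
    have hB : d ^ j2 * (d * v1) = d ^ (j2+1) * v1 := by rw [pow_succ]; ring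
    have hC : d ^ (j2+1) * v1 ≤ d ^ j1 * v1 :=
      Nat.mul_le_mul_right _ (Nat.pow_le_pow_right (by omega) (by omega))
    omega

lemma sub_zero_root (d h : ℕ) : sub d 0 h = Finset.range (treeSize d h) := by
  induction h with
  | zero => simp [sub, treeSize]
  | succ h ih =>
    rw [sub, Finset.range_add_one, Finset.biUnion_insert, ← sub, ih]
    simp only [mul_zero, zero_add, Finset.range_eq_Ico, treeSize_succ]
    rw [Finset.union_comm]
    exact Finset.Ico_union_Ico_eq_Ico (Nat.zero_le _) (Nat.le_add_right _ _)



lemma sub_one (d v : ℕ) : sub d v 1 = {v} := by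
  ext x
  simp [sub, treeSize]

lemma key (d n : ℕ) (hd : 2 ≤ d) (T : ℕ) (c : ℕ → BCfg) (hpeb : BPebbling d n T c) :
    ∀ g, 1 ≤ g → ∀ v a b, sub d v g ⊆ Finset.range n → a ≤ b → b ≤ T →
      (∀ x ∈ sub d v g, c a x = false) → c b v = true →
      ∃ u, a ≤ u ∧ u ≤ b ∧
        (d-1)*(g-1) + 1 ≤ ∑ x ∈ sub d v g, (if c u x then 1 else 0) := by
  intro g hg
  induction g, hg using Nat.le_induction with
  | base =>
    intro v a b _ hab hbT hemp hroot
    refine ⟨b, hab, le_rfl, ?_⟩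
    rw [sub_one, Finset.sum_singleton, hroot]
    simp
  | succ g hg ih =>
    intro v a b Hsub hab hbT Hemp Hroot
    have hd1 : 1 ≤ d := by omega
    have hvmem : v ∈ sub d v (g+1) := self_mem_sub (by omega)
    have hva : c a v = false := Hemp v hvmem
    -- first time the root of the subtree is pebbled
    have hex : ∃ t, a ≤ t ∧ t ≤ b ∧ c t v = true := ⟨b, hab, le_rfl, Hroot⟩
    set t0 := Nat.find hex with ht0
    obtain ⟨hat, htb, htv⟩ := Nat.find_spec hex
    rw [← ht0] at hat htb htv
    have hlt : a < t0 := by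
      rcases Nat.lt_or_ge a t0 with h | h
      · exact h
      · exfalso
        have heq : a = t0 := le_antisymm hat h
        rw [← heq, hva] at htv; exact absurd htv (by simp)
    have hpred : c (t0 - 1) v = false := by
      have hmin := Nat.find_min hex (show t0 - 1 < t0 by omega)
      by_contra hcon
      exact hmin ⟨by omega, by omega, by simpa using hcon⟩
    have hmove : BMove d n (c (t0 - 1)) (c t0) := by
      have := hpeb (t0 - 1) (by omega)
      have he : t0 - 1 + 1 = t0 := by omega
      rwa [he] at this
    -- the children of v
    have hchildmem : ∀ k < d, sub d (d*v+1+k) g ⊆ sub d v (g+1) := by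
      intro k hk x hx
      rw [sub_succ d v g hd1]
      exact Finset.mem_insert_of_mem (Finset.mem_biUnion.2 ⟨k, Finset.mem_range.2 hk, hx⟩)
    rcases hmove with ⟨i, hF⟩ | ⟨i, hin, hcov, hci, hrest⟩ | ⟨i, hleaf, hF⟩
    · -- removal move cannot pebble v
      exfalso
      rw [hF] at htv
      by_cases hiv : i = v
      · subst hiv; simp [Function.update_self] at htv
      · rw [Function.update_of_ne (Ne.symm hiv)] at htv
        rw [hpred] at htv; exact absurd htv (by simp)
    · -- internal move: i = v
      have hiv : i = v := by
        by_contra hiv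
        rcases hrest v (fun h => hiv h.symm) with h | ⟨_, h⟩
        · rw [htv, hpred] at h; exact absurd h (by simp)
        · rw [htv] at h; exact absurd h (by simp)
      subst hiv
      -- all children pebbled at time t0 - 1
      have hchild : ∀ k < d, c (t0-1) (d*i+1+k) = true := fun k hk =>
        hcov _ ⟨k, hk, rfl⟩
      -- last time each child's subtree is empty
      set P : ℕ → ℕ → Prop := fun k r => a ≤ r ∧ ∀ x ∈ sub d (d*i+1+k) g, c r x = false
        with hP
      have hPdec : ∀ k, DecidablePred (P k) := fun k r => by
        unfold P; infer_instance
      set R : ℕ → ℕ := fun k => @Nat.findGreatest (P k) (hPdec k) (t0 - 1) with hR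
      have hPa : ∀ k < d, P k a := by
        intro k hk
        exact ⟨le_rfl, fun x hx => Hemp x (hchildmem k hk hx)⟩
      have haR : ∀ k < d, a ≤ R k := fun k hk =>
        Nat.le_findGreatest (by omega) (hPa k hk)
      have hRt : ∀ k, R k ≤ t0 - 1 := fun k => Nat.findGreatest_le _
      have hRspec : ∀ k < d, P k (R k) := fun k hk =>
        Nat.findGreatest_spec (by omega) (hPa k hk)
      have hRmax : ∀ k, ∀ m, R k < m → m ≤ t0 - 1 → ¬ P k m := fun k m h1 h2 =>
        Nat.findGreatest_is_greatest h1 h2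
      obtain ⟨k0, hk0, hmax⟩ := Finset.exists_max_image (Finset.range d) R ⟨0, by
        simp; omega⟩
      rw [Finset.mem_range] at hk0
      -- apply ih to child k0 on [R k0, t0 - 1]
      obtain ⟨u, hRu, hut, hheavy⟩ := ih (d*i+1+k0) (R k0) (t0-1)
        ((hchildmem k0 hk0).trans Hsub) (hRt k0) (by omega)
        (hRspec k0 hk0).2 (hchild k0 hk0)
      have h1le : 1 ≤ ∑ x ∈ sub d (d*i+1+k0) g, (if c u x then 1 else 0) := by
        have : (d-1)*(g-1) + 1 ≥ 1 := by omega
        omega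
      have hRu' : R k0 < u := by
        rcases Nat.lt_or_ge (R k0) u with h | h
        · exact h
        · exfalso
          have : R k0 = u := le_antisymm hRu h
          have hz : ∑ x ∈ sub d (d*i+1+k0) g, (if c u x then 1 else 0) = 0 :=
            Finset.sum_eq_zero (fun x hx => by
              rw [← this, (hRspec k0 hk0).2 x hx]; simp)
          omega
      -- every other child's subtree is nonempty at time u
      have hnon : ∀ k < d, ∃ x ∈ sub d (d*i+1+k) g, c u x = true := by
        intro k hk
        have hRk : R k < u := lt_of_le_of_lt (hmax k (Finset.mem_range.2 hk)) hRu'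
        have hnP := hRmax k u hRk (by omega)
        by_contra hcon
        push_neg at hcon
        refine hnP ⟨?_, fun x hx => ?_⟩
        · have := haR k hk; omega
        · exact Bool.eq_false_iff.mpr (hcon x hx)
      -- sum the contributions
      refine ⟨u, by have := haR k0 hk0; omega, by omega, ?_⟩
      have hdisj : (↑(Finset.range d) : Set ℕ).PairwiseDisjoint
          (fun k => sub d (d*i+1+k) g) := by
        intro x hx y hy hxy
        simp only [Finset.coe_range, Set.mem_Iio] at hx hy
        rcases Nat.lt_or_ge x y with h | h
        · exact sub_disjoint hd (by omega) (by omega) (by omega)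
        · exact (sub_disjoint hd (by omega) (by omega) (by omega)).symm
      have hvnot : i ∉ (Finset.range d).biUnion fun k => sub d (d*i+1+k) g := by
        intro hmem
        rw [Finset.mem_biUnion] at hmem
        obtain ⟨k, hk, hmem⟩ := hmem
        have h6 := le_of_mem_sub hd1 hmem
        have h7 : i ≤ d * i := Nat.le_mul_of_pos_left i (by omega)
        omega
      rw [sub_succ d i g hd1, Finset.sum_insert hvnot, Finset.sum_biUnion hdisj]
      have hsplit : ∑ k ∈ Finset.range d, ∑ x ∈ sub d (d*i+1+k) g, (if c u x then 1 else 0)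
          = (∑ x ∈ sub d (d*i+1+k0) g, (if c u x then 1 else 0))
            + ∑ k ∈ (Finset.range d).erase k0, ∑ x ∈ sub d (d*i+1+k) g,
                (if c u x then 1 else 0) :=
        (Finset.add_sum_erase _ _ (Finset.mem_range.2 hk0)).symm
      have hones : ∀ k ∈ (Finset.range d).erase k0,
          1 ≤ ∑ x ∈ sub d (d*i+1+k) g, (if c u x then 1 else 0) := by
        intro k hk
        obtain ⟨x, hx, hcx⟩ := hnon k (Finset.mem_range.1 (Finset.mem_of_mem_erase hk))
        refine le_trans ?_ (Finset.single_le_sum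
          (f := fun y => if c u y then (1:ℕ) else 0) (fun y _ => Nat.zero_le _) hx)
        simp [hcx]
      have hcard : (d - 1) ≤ ∑ k ∈ (Finset.range d).erase k0, ∑ x ∈ sub d (d*i+1+k) g,
          (if c u x then 1 else 0) := by
        have := Finset.card_nsmul_le_sum ((Finset.range d).erase k0) _ 1 hones
        rwa [Finset.card_erase_of_mem (Finset.mem_range.2 hk0), Finset.card_range,
          smul_eq_mul, mul_one] at this
      have harith : (d-1)*(g+1-1) + 1 = ((d-1)*(g-1) + 1) + (d-1) := by
        have h5 : g + 1 - 1 = (g-1) + 1 := by omega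
        rw [h5, Nat.mul_succ]
        omega
      omega
    · -- leaf move: i = v, but v is not a leaf
      exfalso
      have hiv : i = v := by
        by_contra hiv
        rw [hF, Function.update_of_ne (Ne.symm hiv), hpred] at htv
        exact absurd htv (by simp)
      subst hiv
      have hmem : d*i+1 ∈ sub d i (g+1) := by
        have : d*i+1+0 ∈ sub d (d*i+1+0) g := self_mem_sub (by omega)
        have := hchildmem 0 (by omega) this
        simpa using this
      have := Finset.mem_range.1 (Hsub hmem)
      have := hleaf.2
      omega

end BlackAux

/-- every black root-pebbling of the d-ary tree of height h ≥ 2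
(d ≥ 2) uses at least (d-1)(h-1)+1 pebbles at some time. -/
theorem black_lower_dary (d h : ℕ) (hd : 2 ≤ d) (hh : 2 ≤ h) (T : ℕ) (c : ℕ → BCfg)
    (hp : BRootPebbling d (treeSize d h) T c) :
    ∃ t, t ≤ T ∧ (d - 1) * (h - 1) + 1 ≤ bweight (treeSize d h) (c t) := by
  obtain ⟨hpeb, h0, hT, t, htT, hroot⟩ := hp
  obtain ⟨u, _, hub, hw⟩ := BlackAux.key d (treeSize d h) hd T c hpeb h (by omega)
    0 0 t (by rw [BlackAux.sub_zero_root]) (Nat.zero_le _) htT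
    (fun x _ => h0 x) hroot
  refine ⟨u, le_trans hub htT, ?_⟩
  rwa [bweight, ← BlackAux.sub_zero_root]
end

section
/- For every whole black-white pebbling of the balanced binary tree of height h ≥ 2 that starts with no pebbles, ends with no pebbles, and at some time has a pebble on the root, there is a time t at which the total pebble weight is at least ⌈h/2⌉ + 1. -/
/-- A black-white configuration: each node gets (black, white) ∈ {0,1}². -/
abbrev BWCfg := ℕ → Bool × Bool

/-- Pebble weight of node i. -/
def bwpw (c : BWCfg) (i : ℕ) : ℕ :=
  (if (c i).1 then 1 else 0) + (if (c i).2 then 1 else 0)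

/-- b(i) + w(i) ≤ 1 for all nodes. -/
def bwValid (c : BWCfg) : Prop := ∀ i, ¬((c i).1 = true ∧ (c i).2 = true)

def bwweight (n : ℕ) (c : BWCfg) : ℕ := ∑ i ∈ Finset.range n, bwpw c i

/-- Every child of i has pebble weight 1. -/
def bwcovered (d : ℕ) (c : BWCfg) (i : ℕ) : Prop := ∀ j, child d i j → bwpw c j = 1

/-- Legal whole black-white pebbling moves: remove a black pebble; on a node
whose children all have pebble weight 1, set w(i)=0 and/or set b(i)=1, optionally
simultaneously removing black pebbles from any children; place a white pebble
anywhere; place a black pebble on any leaf. -/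
def BWMove (d n : ℕ) (c c' : BWCfg) : Prop :=
  (∃ i, c' = Function.update c i (false, (c i).2)) ∨
  (∃ i, i < n ∧ bwcovered d c i ∧ (c' i = (true, false) ∨ c' i = ((c i).1, false)) ∧
    (∀ j, child d i j → (c' j = c j ∨ c' j = (false, (c j).2))) ∧
    (∀ j, j ≠ i → ¬ child d i j → c' j = c j)) ∨
  (∃ i, i < n ∧ c' = Function.update c i ((c i).1, true)) ∨
  (∃ i, isLeaf d n i ∧ c' = Function.update c i (true, (c i).2))

def BWPebbling (d n T : ℕ) (c : ℕ → BWCfg) : Prop :=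
  (∀ t, t ≤ T → bwValid (c t)) ∧ (∀ t, t < T → BWMove d n (c t) (c (t + 1)))

def BWEmpty (c : BWCfg) : Prop := ∀ i, c i = (false, false)

/-- Root-pebbling: starts and ends empty; at some time the root has pebble weight 1. -/
def BWRootPebbling (d n T : ℕ) (c : ℕ → BWCfg) : Prop :=
  BWPebbling d n T c ∧ BWEmpty (c 0) ∧ BWEmpty (c T) ∧ ∃ t, t ≤ T ∧ bwpw (c t) 0 = 1


set_option linter.unusedVariables false

namespace BWAux

open Finset

/-! ### Basic pebble-weight lemmas -/

lemma child_iff {i j : ℕ} : child 2 i j ↔ j = 2*i+1 ∨ j = 2*i+2 := by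
  constructor
  · rintro ⟨k, hk, rfl⟩; omega
  · rintro (rfl | rfl)
    · exact ⟨0, by omega, by omega⟩
    · exact ⟨1, by omega, by omega⟩

lemma covered_left {cfg : BWCfg} {i : ℕ} (h : bwcovered 2 cfg i) :
    bwpw cfg (2*i+1) = 1 := h _ (child_iff.mpr (Or.inl rfl))

lemma covered_right {cfg : BWCfg} {i : ℕ} (h : bwcovered 2 cfg i) :
    bwpw cfg (2*i+2) = 1 := h _ (child_iff.mpr (Or.inr rfl))

lemma pw_black {cfg : BWCfg} {j : ℕ} (h : (cfg j).1 = true) : 1 ≤ bwpw cfg j := by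
  unfold bwpw; rw [h]; simp

lemma pw_white {cfg : BWCfg} {j : ℕ} (h : (cfg j).2 = true) : 1 ≤ bwpw cfg j := by
  unfold bwpw; rw [h]; simp

lemma pw_one_cases {cfg : BWCfg} {j : ℕ} (h : bwpw cfg j = 1) :
    (cfg j).1 = true ∨ (cfg j).2 = true := by
  unfold bwpw at h
  rcases hb : (cfg j).1 <;> rcases hw : (cfg j).2 <;> simp [hb, hw] at h ⊢

lemma pw_zero_black {cfg : BWCfg} {j : ℕ} (h : bwpw cfg j = 0) : (cfg j).1 = false := by
  unfold bwpw at h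
  rcases hb : (cfg j).1 <;> simp [hb] at h ⊢

lemma pw_zero_white {cfg : BWCfg} {j : ℕ} (h : bwpw cfg j = 0) : (cfg j).2 = false := by
  unfold bwpw at h
  rcases hw : (cfg j).2 <;> simp [hw] at h ⊢

/-! ### Move analysis -/

lemma move_black_new {n : ℕ} {c₀ c₁ : BWCfg} (hm : BWMove 2 n c₀ c₁) {u : ℕ}
    (h0 : (c₀ u).1 = false) (h1 : (c₁ u).1 = true) (hleaf : 2*u+1 < n) :
    bwcovered 2 c₀ u ∧ ∀ w, w ≠ u → (c₀ w).1 = false → (c₁ w).1 = false := by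
  rcases hm with ⟨i, rfl⟩ | ⟨i, hin, hcov, hopt, hch, hoth⟩ | ⟨i, hin, rfl⟩ | ⟨i, hlf, rfl⟩
  · exfalso
    rcases eq_or_ne u i with rfl | hne
    · rw [Function.update_self] at h1; simp at h1
    · rw [Function.update_of_ne hne] at h1; simp [h0] at h1
  · have hui : u = i := by
      by_contra hne
      by_cases hc : child 2 i u
      · rcases hch u hc with he | he <;> rw [he] at h1
        · simp [h0] at h1
        · simp at h1
      · rw [hoth u hne hc] at h1; simp [h0] at h1
    subst hui
    refine ⟨hcov, ?_⟩
    intro w hw hw0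
    by_cases hc : child 2 u w
    · rcases hch w hc with he | he
      · rw [he]; exact hw0
      · rw [he]
    · rw [hoth w hw hc]; exact hw0
  · exfalso
    rcases eq_or_ne u i with rfl | hne
    · rw [Function.update_self] at h1; simp [h0] at h1
    · rw [Function.update_of_ne hne] at h1; simp [h0] at h1
  · exfalso
    rcases eq_or_ne u i with rfl | hne
    · rcases hlf with ⟨-, hl⟩; omega
    · rw [Function.update_of_ne hne] at h1; simp [h0] at h1

lemma move_white_off {n : ℕ} {c₀ c₁ : BWCfg} (hm : BWMove 2 n c₀ c₁) {u : ℕ}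
    (h0 : (c₀ u).2 = true) (h1 : (c₁ u).2 = false) :
    bwcovered 2 c₀ u := by
  rcases hm with ⟨i, rfl⟩ | ⟨i, hin, hcov, hopt, hch, hoth⟩ | ⟨i, hin, rfl⟩ | ⟨i, hlf, rfl⟩
  · exfalso
    rcases eq_or_ne u i with rfl | hne
    · rw [Function.update_self] at h1; simp [h0] at h1
    · rw [Function.update_of_ne hne] at h1; simp [h0] at h1
  · have hui : u = i := by
      by_contra hne
      by_cases hc : child 2 i u
      · rcases hch u hc with he | he <;> rw [he] at h1 <;> simp [h0] at h1
      · rw [hoth u hne hc] at h1; simp [h0] at h1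
    subst hui; exact hcov
  · exfalso
    rcases eq_or_ne u i with rfl | hne
    · rw [Function.update_self] at h1; simp at h1
    · rw [Function.update_of_ne hne] at h1; simp [h0] at h1
  · exfalso
    rcases eq_or_ne u i with rfl | hne
    · rw [Function.update_self] at h1; simp [h0] at h1
    · rw [Function.update_of_ne hne] at h1; simp [h0] at h1

end BWAux
namespace BWAux

open Finset

/-! ### Subtree node sets -/

def desc : ℕ → ℕ → Finset ℕ
  | _, 0 => ∅
  | i, k+1 => insert i (desc (2*i+1) k ∪ desc (2*i+2) k)

lemma mem_desc : ∀ {k i j : ℕ}, j ∈ desc i k ↔ ∃ d, d < k ∧ (j+1)/2^d = i+1 := by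
  intro k
  induction k with
  | zero => intro i j; simp [desc]
  | succ k ih =>
    intro i j
    simp only [desc, mem_insert, mem_union, ih]
    constructor
    · rintro (rfl | ⟨d, hd, hdiv⟩ | ⟨d, hd, hdiv⟩)
      · exact ⟨0, by omega, by simp⟩
      · refine ⟨d+1, by omega, ?_⟩
        rw [pow_succ, ← Nat.div_div_eq_div_mul, hdiv]; omega
      · refine ⟨d+1, by omega, ?_⟩
        rw [pow_succ, ← Nat.div_div_eq_div_mul, hdiv]; omega
    · rintro ⟨d, hd, hdiv⟩
      match d with
      | 0 =>
        left; simp at hdiv; omega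
      | d+1 =>
        rw [pow_succ, ← Nat.div_div_eq_div_mul] at hdiv
        have hx : (j+1)/2^d = 2*i+2 ∨ (j+1)/2^d = 2*i+3 := by omega
        rcases hx with hx | hx
        · right; left; exact ⟨d, by omega, by omega⟩
        · right; right; exact ⟨d, by omega, by omega⟩

lemma le_of_mem_desc {i k j : ℕ} (h : j ∈ desc i k) : i ≤ j := by
  rw [mem_desc] at h
  obtain ⟨d, -, hdiv⟩ := h
  have := Nat.div_le_self (j+1) (2^d)
  omega

lemma self_mem_desc {i k : ℕ} (hk : 1 ≤ k) : i ∈ desc i k := by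
  rw [mem_desc]; exact ⟨0, by omega, by simp⟩

lemma desc_child_subset {i k j : ℕ} (hk : 1 ≤ k) (hj : j = 2*i+1 ∨ j = 2*i+2) :
    desc j (k-1) ⊆ desc i k := by
  obtain ⟨k', rfl⟩ : ∃ k', k = k'+1 := ⟨k-1, by omega⟩
  simp only [Nat.add_sub_cancel, desc]
  intro x hx
  rcases hj with rfl | rfl
  · exact mem_insert_of_mem (mem_union_left _ hx)
  · exact mem_insert_of_mem (mem_union_right _ hx)

lemma child_mem_desc {i k j : ℕ} (hk : 2 ≤ k) (hj : j = 2*i+1 ∨ j = 2*i+2) :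
    j ∈ desc i k :=
  desc_child_subset (by omega) hj (self_mem_desc (by omega))

lemma desc_sibling_disjoint {i k k' j : ℕ}
    (h1 : j ∈ desc (2*i+1) k) (h2 : j ∈ desc (2*i+2) k') : False := by
  rw [mem_desc] at h1 h2
  obtain ⟨d, -, hd⟩ := h1
  obtain ⟨d', -, hd'⟩ := h2
  rcases lt_trichotomy d d' with h | h | h
  · have he : (j+1)/2^d' = (2*i+2)/2^(d'-d) := by
      rw [← hd, Nat.div_div_eq_div_mul, ← pow_add]
      congr 2
      omega
    have h2le : (2:ℕ) ≤ 2^(d'-d) := by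
      calc (2:ℕ) = 2^1 := by norm_num
      _ ≤ 2^(d'-d) := Nat.pow_le_pow_right (by norm_num) (by omega)
    have hdd : (2*i+2)/2^(d'-d) ≤ (2*i+2)/2 := Nat.div_le_div_left h2le (by norm_num)
    have h22 : (2*i+2)/2 = i+1 := by omega
    omega
  · subst h; omega
  · have he : (j+1)/2^d = (2*i+3)/2^(d-d') := by
      rw [← hd', Nat.div_div_eq_div_mul, ← pow_add]
      congr 2
      omega
    have h2le : (2:ℕ) ≤ 2^(d-d') := by
      calc (2:ℕ) = 2^1 := by norm_num
      _ ≤ 2^(d-d') := Nat.pow_le_pow_right (by norm_num) (by omega)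
    have hdd : (2*i+3)/2^(d-d') ≤ (2*i+3)/2 := Nat.div_le_div_left h2le (by norm_num)
    have h22 : (2*i+3)/2 = i+1 := by omega
    omega

lemma sibling_pair_disjoint {i x y a b j : ℕ}
    (hxy : (x = 2*i+1 ∧ y = 2*i+2) ∨ (x = 2*i+2 ∧ y = 2*i+1))
    (h1 : j ∈ desc x a) (h2 : j ∈ desc y b) : False := by
  rcases hxy with ⟨rfl, rfl⟩ | ⟨rfl, rfl⟩
  · exact desc_sibling_disjoint h1 h2
  · exact desc_sibling_disjoint h2 h1

/-! ### Subtree weights -/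

def dwt (cfg : BWCfg) (i k : ℕ) : ℕ := ∑ j ∈ desc i k, bwpw cfg j

lemma pw_le_dwt {cfg : BWCfg} {i k j : ℕ} (hj : j ∈ desc i k) :
    bwpw cfg j ≤ dwt cfg i k :=
  Finset.single_le_sum (fun _ _ => Nat.zero_le _) hj

lemma pw_pos_dwt {cfg : BWCfg} {i k j : ℕ} (hj : j ∈ desc i k)
    (h : 1 ≤ bwpw cfg j) : 0 < dwt cfg i k :=
  lt_of_lt_of_le h (pw_le_dwt hj)

lemma dwt_le_of_subset {cfg : BWCfg} {i k i' k' : ℕ} (h : desc i k ⊆ desc i' k') :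
    dwt cfg i k ≤ dwt cfg i' k' :=
  Finset.sum_le_sum_of_subset h

lemma dwt_zero_of_subset {cfg : BWCfg} {i k i' k' : ℕ} (h : desc i k ⊆ desc i' k')
    (h0 : dwt cfg i' k' = 0) : dwt cfg i k = 0 :=
  Nat.le_zero.mp (h0 ▸ dwt_le_of_subset h)

lemma pw_zero_of_dwt_zero {cfg : BWCfg} {i k j : ℕ} (hj : j ∈ desc i k)
    (h0 : dwt cfg i k = 0) : bwpw cfg j = 0 :=
  Nat.le_zero.mp (h0 ▸ pw_le_dwt hj)

lemma dwt_pos_wit {cfg : BWCfg} {i k : ℕ} (h : 0 < dwt cfg i k) :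
    ∃ w, w ∈ desc i k ∧ 1 ≤ bwpw cfg w := by
  by_contra hc
  push_neg at hc
  have : dwt cfg i k = 0 := Finset.sum_eq_zero (fun j hj => by have := hc j hj; omega)
  omega

lemma dwt_wit_add {cfg : BWCfg} {i k i' k' w : ℕ} (hsub : desc i k ⊆ desc i' k')
    (hw : w ∈ desc i' k') (hnw : w ∉ desc i k) (hpw : 1 ≤ bwpw cfg w) :
    dwt cfg i k + 1 ≤ dwt cfg i' k' := by
  have h2 : insert w (desc i k) ⊆ desc i' k' := by
    intro x hx
    rcases Finset.mem_insert.mp hx with rfl | hx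
    · exact hw
    · exact hsub hx
  have h3 := Finset.sum_le_sum_of_subset (f := bwpw cfg) h2
  rw [Finset.sum_insert hnw] at h3
  unfold dwt
  omega

lemma dwt_two {cfg : BWCfg} {i k j₁ j₂ : ℕ} (h₁ : j₁ ∈ desc i k) (h₂ : j₂ ∈ desc i k)
    (hne : j₁ ≠ j₂) (hp₁ : 1 ≤ bwpw cfg j₁) (hp₂ : 1 ≤ bwpw cfg j₂) :
    2 ≤ dwt cfg i k := by
  have h2 : ({j₁, j₂} : Finset ℕ) ⊆ desc i k := by
    intro x hx
    rcases Finset.mem_insert.mp hx with rfl | hx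
    · exact h₁
    · rw [Finset.mem_singleton] at hx; subst hx; exact h₂
  have h3 := Finset.sum_le_sum_of_subset (f := bwpw cfg) h2
  rw [Finset.sum_pair hne] at h3
  unfold dwt
  omega

lemma dwt_three {cfg : BWCfg} {i k j₁ j₂ j₃ : ℕ} (h₁ : j₁ ∈ desc i k)
    (h₂ : j₂ ∈ desc i k) (h₃ : j₃ ∈ desc i k)
    (h12 : j₁ ≠ j₂) (h13 : j₁ ≠ j₃) (h23 : j₂ ≠ j₃)
    (hp₁ : 1 ≤ bwpw cfg j₁) (hp₂ : 1 ≤ bwpw cfg j₂) (hp₃ : 1 ≤ bwpw cfg j₃) :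
    3 ≤ dwt cfg i k := by
  have h2 : ({j₁, j₂, j₃} : Finset ℕ) ⊆ desc i k := by
    intro x hx
    simp only [Finset.mem_insert, Finset.mem_singleton] at hx
    rcases hx with rfl | rfl | rfl
    · exact h₁
    · exact h₂
    · exact h₃
  have h3 := Finset.sum_le_sum_of_subset (f := bwpw cfg) h2
  rw [show ({j₁, j₂, j₃} : Finset ℕ) = insert j₁ {j₂, j₃} from rfl,
    Finset.sum_insert (by simp [h12, h13]), Finset.sum_pair h23] at h3
  unfold dwt
  omega

end BWAux
namespace BWAux

open Finset

variable {n T : ℕ} {c : ℕ → BWCfg}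

/-! ### Temporal lemmas -/

lemma black_origin (hmv : ∀ t, t < T → BWMove 2 n (c t) (c (t+1)))
    {u t₁ t₂ : ℕ} (h₁₂ : t₁ ≤ t₂) (hT : t₂ ≤ T)
    (hb0 : (c t₁ u).1 = false) (hb1 : (c t₂ u).1 = true) (hleaf : 2*u+1 < n) :
    ∃ m, t₁ ≤ m ∧ m < t₂ ∧ (c m u).1 = false ∧ bwcovered 2 (c m) u ∧
      (∀ w, w ≠ u → (c m w).1 = false → (c (m+1) w).1 = false) ∧
      ∀ r, m < r → r ≤ t₂ → (c r u).1 = true := by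
  have hlt : t₁ < t₂ := by
    rcases Nat.lt_or_ge t₁ t₂ with h | h
    · exact h
    · exfalso; have : t₁ = t₂ := by omega
      subst this; rw [hb0] at hb1; simp at hb1
  classical
  set P : ℕ → Prop := fun t => (c t u).1 = false with hP
  have hPt₁ : P t₁ := hb0
  have ht₁le : t₁ ≤ t₂ - 1 := by omega
  set m := Nat.findGreatest P (t₂ - 1) with hm
  have hPm : P m := Nat.findGreatest_spec ht₁le hPt₁
  have hmge : t₁ ≤ m := Nat.le_findGreatest ht₁le hPt₁
  have hmle : m ≤ t₂ - 1 := Nat.findGreatest_le _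
  have hblack : ∀ r, m < r → r ≤ t₂ → (c r u).1 = true := by
    intro r hr1 hr2
    rcases Nat.lt_or_ge r t₂ with h | h
    · have : ¬ P r := Nat.findGreatest_is_greatest hr1 (by omega)
      simpa [hP] using this
    · have : r = t₂ := by omega
      subst this; exact hb1
  have hmlt : m < t₂ := by omega
  have hmove := hmv m (by omega)
  have hnew : (c (m+1) u).1 = true := hblack (m+1) (by omega) (by omega)
  obtain ⟨hcov, hpres⟩ := move_black_new hmove hPm hnew hleaf
  exact ⟨m, hmge, hmlt, hPm, hcov, hpres, hblack⟩

lemma white_end (hmv : ∀ t, t < T → BWMove 2 n (c t) (c (t+1)))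
    {u t₁ t₂ : ℕ} (h₁₂ : t₁ ≤ t₂) (hT : t₂ ≤ T)
    (hw1 : (c t₁ u).2 = true) (hw0 : (c t₂ u).2 = false) :
    ∃ m, t₁ ≤ m ∧ m < t₂ ∧ bwcovered 2 (c m) u ∧
      ∀ r, t₁ ≤ r → r ≤ m → (c r u).2 = true := by
  classical
  have hex : ∃ d, (c (t₁ + d) u).2 = false := ⟨t₂ - t₁, by rwa [Nat.add_sub_cancel' h₁₂]⟩
  set d₀ := Nat.find hex with hd₀
  have hspec : (c (t₁ + d₀) u).2 = false := Nat.find_spec hex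
  have hd₀pos : 0 < d₀ := by
    rcases Nat.eq_zero_or_pos d₀ with h | h
    · exfalso; rw [h] at hspec; simp at hspec; rw [hw1] at hspec; simp at hspec
    · exact h
  have hd₀le : d₀ ≤ t₂ - t₁ := Nat.find_min' hex (by rwa [Nat.add_sub_cancel' h₁₂])
  set m := t₁ + d₀ - 1 with hmdef
  have hwhite : ∀ r, t₁ ≤ r → r ≤ m → (c r u).2 = true := by
    intro r hr1 hr2
    have hlt : r - t₁ < d₀ := by omega
    have := Nat.find_min hex hlt
    have hr : t₁ + (r - t₁) = r := by omega
    rw [hr] at this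
    simpa using this
  have hm1 : m + 1 = t₁ + d₀ := by omega
  have hmlt : m < t₂ := by omega
  have hmove := hmv m (by omega)
  have hwm : (c m u).2 = true := hwhite m (by omega) le_rfl
  have hcov := move_white_off hmove hwm (by rw [hm1]; exact hspec)
  exact ⟨m, by omega, hmlt, hcov, hwhite⟩

lemma zero_interval {F : ℕ → ℕ} {s a e : ℕ} (hsa : s ≤ a) (hae : a ≤ e)
    (hs : F s = 0) (he : F e = 0) (ha : 0 < F a) :
    ∃ p q, s ≤ p ∧ p < a ∧ a < q ∧ q ≤ e ∧ F p = 0 ∧ F q = 0 ∧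
      ∀ t, p < t → t < q → 0 < F t := by
  classical
  set P : ℕ → Prop := fun t => F t = 0 ∧ s ≤ t with hP
  have hPs : P s := ⟨hs, le_rfl⟩
  set p := Nat.findGreatest P a with hp
  have hPp : P p := Nat.findGreatest_spec hsa hPs
  have hpge : s ≤ p := Nat.le_findGreatest hsa hPs
  have hple : p ≤ a := Nat.findGreatest_le _
  have hpa : p < a := by
    rcases Nat.lt_or_ge p a with h | h
    · exact h
    · exfalso; have : p = a := by omega
      rw [this] at hPp; omega
  have hleft : ∀ t, p < t → t ≤ a → 0 < F t := by
    intro t h1 h2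
    have hnP : ¬ P t := Nat.findGreatest_is_greatest h1 h2
    rw [hP] at hnP
    rcases Nat.eq_zero_or_pos (F t) with h0 | h0
    · exact absurd ⟨h0, by omega⟩ hnP
    · exact h0
  have hex : ∃ d, F (a + d) = 0 := ⟨e - a, by rwa [Nat.add_sub_cancel' hae]⟩
  set d₀ := Nat.find hex with hd₀
  set q := a + d₀ with hq
  have hqspec : F q = 0 := Nat.find_spec hex
  have hqle : q ≤ e := by
    have := Nat.find_min' hex (by rwa [Nat.add_sub_cancel' hae])
    omega
  have hq0 : 0 < d₀ := by
    rcases Nat.eq_zero_or_pos d₀ with h | h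
    · exfalso; have : q = a := by omega
      rw [this] at hqspec; omega
    · exact h
  have hright : ∀ t, a ≤ t → t < q → 0 < F t := by
    intro t h1 h2
    have hlt : t - a < d₀ := by omega
    have := Nat.find_min hex hlt
    have hr : a + (t - a) = t := by omega
    rw [hr] at this
    omega
  refine ⟨p, q, hpge, hpa, by omega, hqle, hPp.1, hqspec, ?_⟩
  intro t h1 h2
  rcases Nat.lt_or_ge a t with h | h
  · exact hright t (by omega) h2
  · exact hleft t h1 h

lemma event_mem {G : ℕ → ℕ} {t0 m π κ : ℕ}
    (hπ : G π = 0) (hκ : G κ = 0) (hπa : π < t0) (haκ : t0 < κ)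
    (hpos : ∀ t, min t0 m ≤ t → t ≤ max t0 m → 0 < G t) :
    π < m ∧ m < κ := by
  constructor
  · by_contra hcon
    push_neg at hcon
    have := hpos π (by omega) (by omega)
    omega
  · by_contra hcon
    push_neg at hcon
    have := hpos κ (by omega) (by omega)
    omega

end BWAux
namespace BWAux

open Finset

variable {n T : ℕ} {c : ℕ → BWCfg}

lemma child_event (hmv : ∀ t, t < T → BWMove 2 n (c t) (c (t+1)))
    {u s e a : ℕ} (hsa : s ≤ a) (hae : a ≤ e) (heT : e ≤ T)
    (hs0 : bwpw (c s) u = 0) (he0 : bwpw (c e) u = 0) (ha1 : bwpw (c a) u = 1)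
    (hleaf : 2*u+1 < n) :
    (∃ m, s ≤ m ∧ m < a ∧ (c m u).1 = false ∧ bwcovered 2 (c m) u ∧
      (∀ w, w ≠ u → (c m w).1 = false → (c (m+1) w).1 = false) ∧
      ∀ r, m < r → r ≤ a → (c r u).1 = true) ∨
    (∃ m, a ≤ m ∧ m < e ∧ bwcovered 2 (c m) u ∧
      ∀ r, a ≤ r → r ≤ m → (c r u).2 = true) := by
  rcases pw_one_cases ha1 with hb | hw
  · left
    exact black_origin hmv hsa (le_trans hae heT) (pw_zero_black hs0) hb hleaf
  · right
    exact white_end hmv hae heT hw (pw_zero_white he0)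

lemma node_event (hmv : ∀ t, t < T → BWMove 2 n (c t) (c (t+1)))
    {u s e a : ℕ} (hsa : s ≤ a) (hae : a ≤ e) (heT : e ≤ T)
    (hps : bwpw (c s) u = 0) (hpe : bwpw (c e) u = 0) (hpa : bwpw (c a) u = 1)
    (hleaf : 2*u+1 < n)
    {hh : ℕ} (hhh : 2 ≤ hh)
    {p q : ℕ} (hp0 : dwt (c p) u hh = 0) (hq0 : dwt (c q) u hh = 0)
    (hpa' : p < a) (haq' : a < q) :
    ∃ m, p < m ∧ m < q ∧ bwcovered 2 (c m) u ∧
      ∀ t, a < t → t < m → 1 ≤ bwpw (c t) u := by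
  have hselfmem : u ∈ desc u hh := self_mem_desc (by omega)
  have hchildmem : 2*u+1 ∈ desc u hh := child_mem_desc hhh (Or.inl rfl)
  rcases child_event hmv hsa hae heT hps hpe hpa hleaf with
    ⟨m, hm1, hm2, hmb, hcov, hpres, hblack⟩ | ⟨m, hm1, hm2, hcov, hwhite⟩
  · have hpos : ∀ t, min a m ≤ t → t ≤ max a m → 0 < dwt (c t) u hh := by
      intro t h1 h2
      have hmin : min a m = m := by omega
      have hmax : max a m = a := by omega
      rw [hmin] at h1; rw [hmax] at h2
      rcases Nat.eq_or_lt_of_le h1 with rfl | hlt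
      · exact pw_pos_dwt hchildmem (by rw [covered_left hcov])
      · exact pw_pos_dwt hselfmem (pw_black (hblack t hlt h2))
    have := event_mem (G := fun t => dwt (c t) u hh) hp0 hq0 hpa' haq' hpos
    exact ⟨m, this.1, this.2, hcov, fun t ht1 ht2 => by omega⟩
  · have hpos : ∀ t, min a m ≤ t → t ≤ max a m → 0 < dwt (c t) u hh := by
      intro t h1 h2
      have hmin : min a m = a := by omega
      have hmax : max a m = m := by omega
      rw [hmin] at h1; rw [hmax] at h2
      exact pw_pos_dwt hselfmem (pw_white (hwhite t h1 h2))
    have := event_mem (G := fun t => dwt (c t) u hh) hp0 hq0 hpa' haq' hpos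
    exact ⟨m, this.1, this.2, hcov, fun t ht1 ht2 =>
      pw_white (hwhite t (by omega) (by omega))⟩

lemma IH_wit {x hh : ℕ} {α β μ : ℕ}
    (Hrec : ∀ s' e' a', s' ≤ a' → a' ≤ e' → e' ≤ T → dwt (c s') x hh = 0 →
      dwt (c e') x hh = 0 → bwcovered 2 (c a') x →
      ∃ τ, s' ≤ τ ∧ τ ≤ e' ∧ (hh+1)/2 + 1 ≤ dwt (c τ) x hh)
    (hαμ : α ≤ μ) (hμβ : μ ≤ β) (hβT : β ≤ T)
    (hα0 : dwt (c α) x hh = 0) (hβ0 : dwt (c β) x hh = 0)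
    (hcov : bwcovered 2 (c μ) x)
    {v k : ℕ} (hsub : desc x hh ⊆ desc v k)
    (hwit : ∀ τ, α < τ → τ < β → ∃ w, w ∈ desc v k ∧ w ∉ desc x hh ∧ 1 ≤ bwpw (c τ) w) :
    ∃ τ, α ≤ τ ∧ τ ≤ β ∧ (hh+1)/2 + 2 ≤ dwt (c τ) v k := by
  obtain ⟨τ, h1, h2, h3⟩ := Hrec α β μ hαμ hμβ hβT hα0 hβ0 hcov
  have hτα : α < τ := by
    rcases Nat.eq_or_lt_of_le h1 with rfl | h
    · rw [hα0] at h3; omega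
    · exact h
  have hτβ : τ < β := by
    rcases Nat.eq_or_lt_of_le h2 with rfl | h
    · rw [hβ0] at h3; omega
    · exact h
  obtain ⟨w, hw1, hw2, hw3⟩ := hwit τ hτα hτβ
  have := dwt_wit_add (cfg := c τ) hsub hw1 hw2 hw3
  exact ⟨τ, h1, h2, by omega⟩

end BWAux
namespace BWAux

open Finset

variable {n T : ℕ} {c : ℕ → BWCfg}

lemma desc_grandchild_subset {v k uL g : ℕ} (hk : 4 ≤ k)
    (hsibL : uL = 2*v+1 ∨ uL = 2*v+2) (hg : g = 2*uL+1 ∨ g = 2*uL+2) :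
    desc g (k-2) ⊆ desc v k := by
  have h1 : desc g (k-1-1) ⊆ desc uL (k-1) := desc_child_subset (by omega) hg
  have h2 : desc uL (k-1) ⊆ desc v k := desc_child_subset (by omega) hsibL
  have he : k-1-1 = k-2 := by omega
  rw [he] at h1
  exact subset_trans h1 h2

lemma cover_case {v k uE uL gA gB : ℕ} (hk : 4 ≤ k)
    (hsib : (uE = 2*v+1 ∧ uL = 2*v+2) ∨ (uE = 2*v+2 ∧ uL = 2*v+1))
    (hg : (gA = 2*uL+1 ∧ gB = 2*uL+2) ∨ (gA = 2*uL+2 ∧ gB = 2*uL+1))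
    (Hrec : ∀ s' e' a', s' ≤ a' → a' ≤ e' → e' ≤ T → dwt (c s') gA (k-2) = 0 →
      dwt (c e') gA (k-2) = 0 → bwcovered 2 (c a') gA →
      ∃ τ, s' ≤ τ ∧ τ ≤ e' ∧ (k-2+1)/2 + 1 ≤ dwt (c τ) gA (k-2))
    {a mL pE qE πA κA nA πB κB : ℕ}
    (hκT : κA ≤ T)
    (hA0 : dwt (c πA) gA (k-2) = 0) (hA0' : dwt (c κA) gA (k-2) = 0)
    (hnA1 : πA ≤ nA) (hnA2 : nA ≤ κA) (hcovA : bwcovered 2 (c nA) gA)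
    (hBpos : ∀ t, πB < t → t < κB → 0 < dwt (c t) gB (k-2))
    (hEpos : ∀ t, pE < t → t < qE → 0 < dwt (c t) uE (k-1))
    (hLpw : ∀ t, a < t → t < mL → 1 ≤ bwpw (c t) uL)
    (hππ : πA < πB) (hκκ : κA < κB) (hπBmL : πB < mL)
    (hpEπA : pE < πA) (haqE : a < qE) :
    ∃ τ, πA ≤ τ ∧ τ ≤ κA ∧ (k+1)/2 + 1 ≤ dwt (c τ) v k := by
  have hsibL : uL = 2*v+1 ∨ uL = 2*v+2 := by rcases hsib with ⟨h1, h2⟩ | ⟨h1, h2⟩ <;> omega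
  have hsibE : uE = 2*v+1 ∨ uE = 2*v+2 := by rcases hsib with ⟨h1, h2⟩ | ⟨h1, h2⟩ <;> omega
  have hgA : gA = 2*uL+1 ∨ gA = 2*uL+2 := by rcases hg with ⟨h1, h2⟩ | ⟨h1, h2⟩ <;> omega
  have hgB : gB = 2*uL+1 ∨ gB = 2*uL+2 := by rcases hg with ⟨h1, h2⟩ | ⟨h1, h2⟩ <;> omega
  have hsubA : desc gA (k-2) ⊆ desc v k := desc_grandchild_subset hk hsibL hgA
  have hsubB : desc gB (k-2) ⊆ desc v k := desc_grandchild_subset hk hsibL hgB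
  have hsubAL : desc gA (k-2) ⊆ desc uL (k-1) := by
    have h1 : desc gA (k-1-1) ⊆ desc uL (k-1) := desc_child_subset (by omega) hgA
    have he : k-1-1 = k-2 := by omega
    rwa [he] at h1
  have hsubE : desc uE (k-1) ⊆ desc v k := desc_child_subset (by omega) hsibE
  have hwit : ∀ τ, πA < τ → τ < κA →
      ∃ w, w ∈ desc v k ∧ w ∉ desc gA (k-2) ∧ 1 ≤ bwpw (c τ) w := by
    intro τ hτ1 hτ2
    by_cases h1 : πB < τ
    · -- sibling grandchild subtree is nonempty
      obtain ⟨w, hw1, hw2⟩ := dwt_pos_wit (hBpos τ h1 (by omega))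
      refine ⟨w, hsubB hw1, fun hcon => ?_, hw2⟩
      exact sibling_pair_disjoint hg hcon hw1
    · push_neg at h1
      by_cases h2 : τ < qE
      · obtain ⟨w, hw1, hw2⟩ := dwt_pos_wit (hEpos τ (by omega) h2)
        refine ⟨w, hsubE hw1, fun hcon => ?_, hw2⟩
        exact sibling_pair_disjoint hsib hw1 (hsubAL hcon)
      · push_neg at h2
        refine ⟨uL, child_mem_desc (by omega) hsibL, fun hcon => ?_,
          hLpw τ (by omega) (by omega)⟩
        have := le_of_mem_desc hcon
        omega
  obtain ⟨τ, h1, h2, h3⟩ := IH_wit Hrec hnA1 hnA2 hκT hA0 hA0' hcovA hsubA hwit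
  exact ⟨τ, h1, h2, by omega⟩

lemma staggered_case (hmv : ∀ t, t < T → BWMove 2 n (c t) (c (t+1)))
    {v k uE uL : ℕ} (hk : 4 ≤ k)
    (hsib : (uE = 2*v+1 ∧ uL = 2*v+2) ∨ (uE = 2*v+2 ∧ uL = 2*v+1))
    (hrange : desc v k ⊆ Finset.range n)
    (Hrec : ∀ g, (g = 2*uL+1 ∨ g = 2*uL+2) → ∀ s' e' a', s' ≤ a' → a' ≤ e' → e' ≤ T →
      dwt (c s') g (k-2) = 0 → dwt (c e') g (k-2) = 0 → bwcovered 2 (c a') g →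
      ∃ τ, s' ≤ τ ∧ τ ≤ e' ∧ (k-2+1)/2 + 1 ≤ dwt (c τ) g (k-2))
    {a pE qE pL qL mL : ℕ}
    (hqLT : qL ≤ T)
    (hpEpL : pE < pL) (hqEqL : qE < qL)
    (hpEa : pE < a) (haqE : a < qE) (hpLa : pL < a) (haqL : a < qL)
    (hL0 : dwt (c pL) uL (k-1) = 0) (hL0' : dwt (c qL) uL (k-1) = 0)
    (hEpos : ∀ t, pE < t → t < qE → 0 < dwt (c t) uE (k-1))
    (hcovL : bwcovered 2 (c mL) uL)
    (hmL1 : pL < mL) (hmL2 : mL < qL)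
    (hLpw : ∀ t, a < t → t < mL → 1 ≤ bwpw (c t) uL) :
    ∃ τ, pL ≤ τ ∧ τ ≤ qL ∧ (k+1)/2 + 1 ≤ dwt (c τ) v k := by
  have hsibL : uL = 2*v+1 ∨ uL = 2*v+2 := by rcases hsib with ⟨h1, h2⟩ | ⟨h1, h2⟩ <;> omega
  -- grandchildren
  set g₁ := 2*uL+1 with hg₁
  set g₂ := 2*uL+2 with hg₂
  have hmemL : ∀ g, (g = 2*uL+1 ∨ g = 2*uL+2) → g ∈ desc uL (k-1) :=
    fun g hg => child_mem_desc (by omega) hg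
  have hsubL : ∀ g, (g = 2*uL+1 ∨ g = 2*uL+2) → desc g (k-2) ⊆ desc uL (k-1) := by
    intro g hg
    have h1 : desc g (k-1-1) ⊆ desc uL (k-1) := desc_child_subset (by omega) hg
    have he : k-1-1 = k-2 := by omega
    rwa [he] at h1
  have hsubvk : desc uL (k-1) ⊆ desc v k := desc_child_subset (by omega) hsibL
  have hleafg : ∀ g, (g = 2*uL+1 ∨ g = 2*uL+2) → 2*g+1 < n := by
    intro g hg
    have hmem : 2*g+2 ∈ desc g (k-2) := child_mem_desc (by omega) (Or.inr rfl)
    have : 2*g+2 ∈ Finset.range n := hrange (hsubvk (hsubL g hg hmem))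
    rw [Finset.mem_range] at this
    omega
  -- process grandchild j: returns interval and event
  have hproc : ∀ g, (g = 2*uL+1 ∨ g = 2*uL+2) →
      ∃ π κ ng, pL ≤ π ∧ π < mL ∧ mL < κ ∧ κ ≤ qL ∧
        dwt (c π) g (k-2) = 0 ∧ dwt (c κ) g (k-2) = 0 ∧
        (∀ t, π < t → t < κ → 0 < dwt (c t) g (k-2)) ∧
        π < ng ∧ ng < κ ∧ bwcovered 2 (c ng) g := by
    intro g hg
    have hpw1 : bwpw (c mL) g = 1 := hcovL g (by
      rw [child_iff]; omega)
    have hpws : bwpw (c pL) g = 0 :=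
      pw_zero_of_dwt_zero (hmemL g hg) hL0
    have hpwe : bwpw (c qL) g = 0 :=
      pw_zero_of_dwt_zero (hmemL g hg) hL0'
    have hd0s : dwt (c pL) g (k-2) = 0 := dwt_zero_of_subset (hsubL g hg) hL0
    have hd0e : dwt (c qL) g (k-2) = 0 := dwt_zero_of_subset (hsubL g hg) hL0'
    have hdpos : 0 < dwt (c mL) g (k-2) :=
      pw_pos_dwt (self_mem_desc (by omega)) (by omega)
    obtain ⟨π, κ, hπ1, hπ2, hκ1, hκ2, hπ0, hκ0, hpos⟩ :=
      zero_interval (F := fun t => dwt (c t) g (k-2)) (by omega : pL ≤ mL)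
        (by omega : mL ≤ qL) hd0s hd0e hdpos
    obtain ⟨ng, hng1, hng2, hngcov, _⟩ :=
      node_event hmv (by omega : pL ≤ mL) (by omega : mL ≤ qL) hqLT
        hpws hpwe hpw1 (hleafg g hg) (by omega : 2 ≤ k-2) hπ0 hκ0 hπ2 hκ1
    exact ⟨π, κ, ng, hπ1, hπ2, hκ1, hκ2, hπ0, hκ0, hpos, hng1, hng2, hngcov⟩
  obtain ⟨π₁, κ₁, n₁, hπ₁1, hπ₁2, hκ₁1, hκ₁2, hπ₁0, hκ₁0, hpos₁, hn₁1, hn₁2, hcov₁⟩ :=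
    hproc g₁ (Or.inl rfl)
  obtain ⟨π₂, κ₂, n₂, hπ₂1, hπ₂2, hκ₂1, hκ₂2, hπ₂0, hκ₂0, hpos₂, hn₂1, hn₂2, hcov₂⟩ :=
    hproc g₂ (Or.inr rfl)
  -- dichotomy on the grandchild intervals
  by_cases hN1 : π₂ ≤ π₁ ∧ κ₁ ≤ κ₂
  · -- g₁ interval nested inside g₂ interval
    have hwit : ∀ τ, π₁ < τ → τ < κ₁ →
        ∃ w, w ∈ desc v k ∧ w ∉ desc g₁ (k-2) ∧ 1 ≤ bwpw (c τ) w := by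
      intro τ h1 h2
      obtain ⟨w, hw1, hw2⟩ := dwt_pos_wit (hpos₂ τ (by omega) (by omega))
      refine ⟨w, hsubvk (hsubL g₂ (Or.inr rfl) hw1), fun hcon => ?_, hw2⟩
      exact desc_sibling_disjoint hcon hw1
    obtain ⟨τ, h1, h2, h3⟩ := IH_wit (Hrec g₁ (Or.inl rfl)) (le_of_lt hn₁1)
      (le_of_lt hn₁2) (by omega) hπ₁0 hκ₁0 hcov₁
      (desc_grandchild_subset hk hsibL (Or.inl rfl)) hwit
    exact ⟨τ, by omega, by omega, by omega⟩
  · by_cases hN2 : π₁ ≤ π₂ ∧ κ₂ ≤ κ₁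
    · -- g₂ interval nested inside g₁ interval
      have hwit : ∀ τ, π₂ < τ → τ < κ₂ →
          ∃ w, w ∈ desc v k ∧ w ∉ desc g₂ (k-2) ∧ 1 ≤ bwpw (c τ) w := by
        intro τ h1 h2
        obtain ⟨w, hw1, hw2⟩ := dwt_pos_wit (hpos₁ τ (by omega) (by omega))
        refine ⟨w, hsubvk (hsubL g₁ (Or.inl rfl) hw1), fun hcon => ?_, hw2⟩
        exact desc_sibling_disjoint hw1 hcon
      obtain ⟨τ, h1, h2, h3⟩ := IH_wit (Hrec g₂ (Or.inr rfl)) (le_of_lt hn₂1)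
        (le_of_lt hn₂2) (by omega) hπ₂0 hκ₂0 hcov₂
        (desc_grandchild_subset hk hsibL (Or.inr rfl)) hwit
      exact ⟨τ, by omega, by omega, by omega⟩
    · have hstag : (π₁ < π₂ ∧ κ₁ < κ₂) ∨ (π₂ < π₁ ∧ κ₂ < κ₁) := by omega
      rcases hstag with ⟨h1, h2⟩ | ⟨h1, h2⟩
      · obtain ⟨τ, ht1, ht2, ht3⟩ := cover_case hk hsib (Or.inl ⟨rfl, rfl⟩)
          (Hrec g₁ (Or.inl rfl)) (by omega) hπ₁0 hκ₁0 (le_of_lt hn₁1)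
          (le_of_lt hn₁2) hcov₁ hpos₂ hEpos hLpw h1 h2 hπ₂2 (by omega) haqE
        exact ⟨τ, by omega, by omega, ht3⟩
      · obtain ⟨τ, ht1, ht2, ht3⟩ := cover_case hk hsib (Or.inr ⟨rfl, rfl⟩)
          (Hrec g₂ (Or.inr rfl)) (by omega) hπ₂0 hκ₂0 (le_of_lt hn₂1)
          (le_of_lt hn₂2) hcov₂ hpos₁ hEpos hLpw h1 h2 hπ₁2 (by omega) haqE
        exact ⟨τ, by omega, by omega, ht3⟩

end BWAux
namespace BWAux

open Finset

variable {n T : ℕ} {c : ℕ → BWCfg}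

lemma main_lemma (hmv : ∀ t, t < T → BWMove 2 n (c t) (c (t+1))) :
    ∀ k, 2 ≤ k → ∀ v s e a, s ≤ a → a ≤ e → e ≤ T →
    desc v k ⊆ Finset.range n →
    dwt (c s) v k = 0 → dwt (c e) v k = 0 → bwcovered 2 (c a) v →
    ∃ τ, s ≤ τ ∧ τ ≤ e ∧ (k+1)/2 + 1 ≤ dwt (c τ) v k := by
  intro k
  induction k using Nat.strong_induction_on with
  | _ k IH =>
  intro hk2 v s e a hsa hae heT hrange hs0 he0 hcov
  have hc1 : bwpw (c a) (2*v+1) = 1 := covered_left hcov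
  have hc2 : bwpw (c a) (2*v+2) = 1 := covered_right hcov
  have hm1 : 2*v+1 ∈ desc v k := child_mem_desc hk2 (Or.inl rfl)
  have hm2 : 2*v+2 ∈ desc v k := child_mem_desc hk2 (Or.inr rfl)
  rcases Nat.lt_or_ge k 3 with hk3 | hk3
  · -- base case k = 2
    have hkeq : k = 2 := by omega
    subst hkeq
    have h2 : 2 ≤ dwt (c a) v 2 :=
      dwt_two hm1 hm2 (by omega) (by omega) (by omega)
    exact ⟨a, hsa, hae, by omega⟩
  rcases Nat.lt_or_ge k 4 with hk4 | hk4
  · -- base case k = 3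
    have hkeq : k = 3 := by omega
    subst hkeq
    -- children (height 2) and their children (leaves) memberships
    have hmm1 : 2*(2*v+1)+1 ∈ desc v 3 := by
      refine desc_child_subset (by omega) (Or.inl rfl) ?_
      exact child_mem_desc (by omega) (Or.inl rfl)
    have hmm2 : 2*(2*v+1)+2 ∈ desc v 3 := by
      refine desc_child_subset (by omega) (Or.inl rfl) ?_
      exact child_mem_desc (by omega) (Or.inr rfl)
    have hmm3 : 2*(2*v+2)+1 ∈ desc v 3 := by
      refine desc_child_subset (by omega) (Or.inr rfl) ?_
      exact child_mem_desc (by omega) (Or.inl rfl)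
    have hmm4 : 2*(2*v+2)+2 ∈ desc v 3 := by
      refine desc_child_subset (by omega) (Or.inr rfl) ?_
      exact child_mem_desc (by omega) (Or.inr rfl)
    have hleaf1 : 2*(2*v+1)+1 < n := by
      have := hrange hmm2; rw [Finset.mem_range] at this; omega
    have hleaf2 : 2*(2*v+2)+1 < n := by
      have := hrange hmm4; rw [Finset.mem_range] at this; omega
    have hps1 : bwpw (c s) (2*v+1) = 0 := pw_zero_of_dwt_zero hm1 hs0
    have hpe1 : bwpw (c e) (2*v+1) = 0 := pw_zero_of_dwt_zero hm1 he0
    have hps2 : bwpw (c s) (2*v+2) = 0 := pw_zero_of_dwt_zero hm2 hs0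
    have hpe2 : bwpw (c e) (2*v+2) = 0 := pw_zero_of_dwt_zero hm2 he0
    have hev1 := child_event hmv hsa hae heT hps1 hpe1 hc1 hleaf1
    have hev2 := child_event hmv hsa hae heT hps2 hpe2 hc2 hleaf2
    -- helper: a white child gives weight 3 at its removal event
    rcases hev1 with ⟨m₁, hm₁1, hm₁2, hb₁, hcov₁, hpres₁, hblack₁⟩ |
      ⟨m, hmw1, hmw2, hcovw, hwhite⟩
    swap
    · -- child 1 white
      refine ⟨m, by omega, by omega, ?_⟩
      have h3 : 3 ≤ dwt (c m) v 3 :=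
        dwt_three hm1 hmm1 hmm2 (by omega) (by omega) (by omega)
          (pw_white (hwhite m hmw1 le_rfl))
          (by rw [covered_left hcovw]) (by rw [covered_right hcovw])
      omega
    rcases hev2 with ⟨m₂, hm₂1, hm₂2, hb₂, hcov₂, hpres₂, hblack₂⟩ |
      ⟨m, hmw1, hmw2, hcovw, hwhite⟩
    swap
    · -- child 2 white
      refine ⟨m, by omega, by omega, ?_⟩
      have h3 : 3 ≤ dwt (c m) v 3 :=
        dwt_three hm2 hmm3 hmm4 (by omega) (by omega) (by omega)
          (pw_white (hwhite m hmw1 le_rfl))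
          (by rw [covered_left hcovw]) (by rw [covered_right hcovw])
      omega
    -- both children black
    have hne : m₁ ≠ m₂ := by
      intro heq
      subst heq
      have h1 : (c m₁ (2*v+2)).1 = false := hb₂
      have h2 : (c (m₁+1) (2*v+2)).1 = false := hpres₁ _ (by omega) h1
      have h3 : (c (m₁+1) (2*v+2)).1 = true := hblack₂ _ (by omega) (by omega)
      rw [h2] at h3; exact Bool.false_ne_true h3
    rcases Nat.lt_or_ge m₁ m₂ with hlt | hge
    · refine ⟨m₂, by omega, by omega, ?_⟩
      have h3 : 3 ≤ dwt (c m₂) v 3 :=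
        dwt_three hm1 hmm3 hmm4 (by omega) (by omega) (by omega)
          (pw_black (hblack₁ m₂ hlt (by omega)))
          (by rw [covered_left hcov₂]) (by rw [covered_right hcov₂])
      omega
    · have hlt : m₂ < m₁ := by omega
      refine ⟨m₁, by omega, by omega, ?_⟩
      have h3 : 3 ≤ dwt (c m₁) v 3 :=
        dwt_three hm2 hmm1 hmm2 (by omega) (by omega) (by omega)
          (pw_black (hblack₂ m₁ hlt (by omega)))
          (by rw [covered_left hcov₁]) (by rw [covered_right hcov₁])
      omega
  -- inductive step, k ≥ 4
  have hsub₁ : desc (2*v+1) (k-1) ⊆ desc v k := desc_child_subset (by omega) (Or.inl rfl)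
  have hsub₂ : desc (2*v+2) (k-1) ⊆ desc v k := desc_child_subset (by omega) (Or.inr rfl)
  have hleaf₁ : 2*(2*v+1)+1 < n := by
    have hmem : 2*(2*v+1)+2 ∈ desc (2*v+1) (k-1) := child_mem_desc (by omega) (Or.inr rfl)
    have := hrange (hsub₁ hmem); rw [Finset.mem_range] at this; omega
  have hleaf₂ : 2*(2*v+2)+1 < n := by
    have hmem : 2*(2*v+2)+2 ∈ desc (2*v+2) (k-1) := child_mem_desc (by omega) (Or.inr rfl)
    have := hrange (hsub₂ hmem); rw [Finset.mem_range] at this; omega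
  have hd₁s : dwt (c s) (2*v+1) (k-1) = 0 := dwt_zero_of_subset hsub₁ hs0
  have hd₁e : dwt (c e) (2*v+1) (k-1) = 0 := dwt_zero_of_subset hsub₁ he0
  have hd₂s : dwt (c s) (2*v+2) (k-1) = 0 := dwt_zero_of_subset hsub₂ hs0
  have hd₂e : dwt (c e) (2*v+2) (k-1) = 0 := dwt_zero_of_subset hsub₂ he0
  have hd₁a : 0 < dwt (c a) (2*v+1) (k-1) :=
    pw_pos_dwt (self_mem_desc (by omega)) (by omega)
  have hd₂a : 0 < dwt (c a) (2*v+2) (k-1) :=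
    pw_pos_dwt (self_mem_desc (by omega)) (by omega)
  obtain ⟨p₁, q₁, hp₁s, hp₁a, haq₁, hq₁e, hp₁0, hq₁0, hpos₁⟩ :=
    zero_interval (F := fun t => dwt (c t) (2*v+1) (k-1)) hsa hae hd₁s hd₁e hd₁a
  obtain ⟨p₂, q₂, hp₂s, hp₂a, haq₂, hq₂e, hp₂0, hq₂0, hpos₂⟩ :=
    zero_interval (F := fun t => dwt (c t) (2*v+2) (k-1)) hsa hae hd₂s hd₂e hd₂a
  obtain ⟨m₁, hm₁1, hm₁2, hcovm₁, hLpw₁⟩ :=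
    node_event hmv hsa hae heT (pw_zero_of_dwt_zero hm1 hs0)
      (pw_zero_of_dwt_zero hm1 he0) hc1 hleaf₁ (by omega : 2 ≤ k-1) hp₁0 hq₁0 hp₁a haq₁
  obtain ⟨m₂, hm₂1, hm₂2, hcovm₂, hLpw₂⟩ :=
    node_event hmv hsa hae heT (pw_zero_of_dwt_zero hm2 hs0)
      (pw_zero_of_dwt_zero hm2 he0) hc2 hleaf₂ (by omega : 2 ≤ k-1) hp₂0 hq₂0 hp₂a haq₂
  -- recursion instantiation for children (height k-1)
  have Hrec₁ : ∀ s' e' a', s' ≤ a' → a' ≤ e' → e' ≤ T → dwt (c s') (2*v+1) (k-1) = 0 →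
      dwt (c e') (2*v+1) (k-1) = 0 → bwcovered 2 (c a') (2*v+1) →
      ∃ τ, s' ≤ τ ∧ τ ≤ e' ∧ (k-1+1)/2 + 1 ≤ dwt (c τ) (2*v+1) (k-1) :=
    fun s' e' a' h1 h2 h3 h4 h5 h6 =>
      IH (k-1) (by omega) (by omega) (2*v+1) s' e' a' h1 h2 h3
        (subset_trans hsub₁ hrange) h4 h5 h6
  have Hrec₂ : ∀ s' e' a', s' ≤ a' → a' ≤ e' → e' ≤ T → dwt (c s') (2*v+2) (k-1) = 0 →
      dwt (c e') (2*v+2) (k-1) = 0 → bwcovered 2 (c a') (2*v+2) →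
      ∃ τ, s' ≤ τ ∧ τ ≤ e' ∧ (k-1+1)/2 + 1 ≤ dwt (c τ) (2*v+2) (k-1) :=
    fun s' e' a' h1 h2 h3 h4 h5 h6 =>
      IH (k-1) (by omega) (by omega) (2*v+2) s' e' a' h1 h2 h3
        (subset_trans hsub₂ hrange) h4 h5 h6
  by_cases hN1 : p₂ ≤ p₁ ∧ q₁ ≤ q₂
  · -- interval of child 1 nested inside that of child 2
    have hwit : ∀ τ, p₁ < τ → τ < q₁ →
        ∃ w, w ∈ desc v k ∧ w ∉ desc (2*v+1) (k-1) ∧ 1 ≤ bwpw (c τ) w := by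
      intro τ h1 h2
      obtain ⟨w, hw1, hw2⟩ := dwt_pos_wit (hpos₂ τ (by omega) (by omega))
      exact ⟨w, hsub₂ hw1, fun hcon => desc_sibling_disjoint hcon hw1, hw2⟩
    obtain ⟨τ, h1, h2, h3⟩ := IH_wit Hrec₁ (le_of_lt hm₁1) (le_of_lt hm₁2)
      (by omega) hp₁0 hq₁0 hcovm₁ hsub₁ hwit
    exact ⟨τ, by omega, by omega, by omega⟩
  by_cases hN2 : p₁ ≤ p₂ ∧ q₂ ≤ q₁
  · have hwit : ∀ τ, p₂ < τ → τ < q₂ →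
        ∃ w, w ∈ desc v k ∧ w ∉ desc (2*v+2) (k-1) ∧ 1 ≤ bwpw (c τ) w := by
      intro τ h1 h2
      obtain ⟨w, hw1, hw2⟩ := dwt_pos_wit (hpos₁ τ (by omega) (by omega))
      exact ⟨w, hsub₁ hw1, fun hcon => desc_sibling_disjoint hw1 hcon, hw2⟩
    obtain ⟨τ, h1, h2, h3⟩ := IH_wit Hrec₂ (le_of_lt hm₂1) (le_of_lt hm₂2)
      (by omega) hp₂0 hq₂0 hcovm₂ hsub₂ hwit
    exact ⟨τ, by omega, by omega, by omega⟩
  have hstag : (p₁ < p₂ ∧ q₁ < q₂) ∨ (p₂ < p₁ ∧ q₂ < q₁) := by omega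
  rcases hstag with ⟨h1, h2⟩ | ⟨h1, h2⟩
  · -- child 1 early, child 2 late
    have HrecG : ∀ g, (g = 2*(2*v+2)+1 ∨ g = 2*(2*v+2)+2) → ∀ s' e' a',
        s' ≤ a' → a' ≤ e' → e' ≤ T → dwt (c s') g (k-2) = 0 →
        dwt (c e') g (k-2) = 0 → bwcovered 2 (c a') g →
        ∃ τ, s' ≤ τ ∧ τ ≤ e' ∧ (k-2+1)/2 + 1 ≤ dwt (c τ) g (k-2) :=
      fun g hg s' e' a' h1 h2 h3 h4 h5 h6 =>
        IH (k-2) (by omega) (by omega) g s' e' a' h1 h2 h3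
          (subset_trans (desc_grandchild_subset hk4 (Or.inr rfl) hg) hrange) h4 h5 h6
    obtain ⟨τ, ht1, ht2, ht3⟩ := staggered_case hmv hk4 (Or.inl ⟨rfl, rfl⟩) hrange
      HrecG (by omega) h1 h2 hp₁a haq₁ hp₂a haq₂ hp₂0 hq₂0 hpos₁ hcovm₂ hm₂1 hm₂2 hLpw₂
    exact ⟨τ, by omega, by omega, ht3⟩
  · -- child 2 early, child 1 late
    have HrecG : ∀ g, (g = 2*(2*v+1)+1 ∨ g = 2*(2*v+1)+2) → ∀ s' e' a',
        s' ≤ a' → a' ≤ e' → e' ≤ T → dwt (c s') g (k-2) = 0 →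
        dwt (c e') g (k-2) = 0 → bwcovered 2 (c a') g →
        ∃ τ, s' ≤ τ ∧ τ ≤ e' ∧ (k-2+1)/2 + 1 ≤ dwt (c τ) g (k-2) :=
      fun g hg s' e' a' h1 h2 h3 h4 h5 h6 =>
        IH (k-2) (by omega) (by omega) g s' e' a' h1 h2 h3
          (subset_trans (desc_grandchild_subset hk4 (Or.inl rfl) hg) hrange) h4 h5 h6
    obtain ⟨τ, ht1, ht2, ht3⟩ := staggered_case hmv hk4 (Or.inr ⟨rfl, rfl⟩) hrange
      HrecG (by omega) h1 h2 hp₂a haq₂ hp₁a haq₁ hp₁0 hq₁0 hpos₂ hcovm₁ hm₁1 hm₁2 hLpw₁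
    exact ⟨τ, by omega, by omega, ht3⟩

end BWAux
namespace BWAux

lemma treeSize_two : ∀ h : ℕ, treeSize 2 h = 2^h - 1 := by
  intro h
  induction h with
  | zero => simp [treeSize]
  | succ h ih =>
    have h1 : 1 ≤ 2^h := Nat.one_le_two_pow
    unfold treeSize at ih ⊢
    rw [Finset.sum_range_succ, ih]
    have : (2:ℕ)^(h+1) = 2^h + 2^h := by ring
    omega

lemma desc_zero_subset {h : ℕ} : desc 0 h ⊆ Finset.range (2^h - 1) := by
  intro j hj
  rw [mem_desc] at hj
  obtain ⟨d, hd, hdiv⟩ := hj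
  rw [Finset.mem_range]
  have hpos : 0 < 2^d := Nat.pow_pos (by norm_num)
  have h2 : (j+1)/2^d < 2 := by omega
  rw [Nat.div_lt_iff_lt_mul hpos] at h2
  have h3 : 2^d * 2 = 2^(d+1) := (pow_succ 2 d)
  have h4 : (2:ℕ)^(d+1) ≤ 2^h := Nat.pow_le_pow_right (by norm_num) (by omega)
  omega

lemma pw_empty {cfg : BWCfg} (h : BWEmpty cfg) (j : ℕ) : bwpw cfg j = 0 := by
  unfold bwpw
  rw [h j]
  simp

end BWAux


open BWAux

/-- every whole black-white root-pebbling of the binary tree of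
height h ≥ 2 uses total pebble weight at least ⌈h/2⌉ + 1 at some time. -/
theorem bw_lower_binary (h : ℕ) (hh : 2 ≤ h) (T : ℕ) (c : ℕ → BWCfg)
    (hp : BWRootPebbling 2 (treeSize 2 h) T c) :
    ∃ t, t ≤ T ∧ (h + 1) / 2 + 1 ≤ bwweight (treeSize 2 h) (c t) := by
  obtain ⟨⟨hvalid, hmv⟩, hem0, hemT, t₀, ht₀, hpw⟩ := hp
  have hn : treeSize 2 h = 2^h - 1 := treeSize_two h
  have h4 : (4:ℕ) ≤ 2^h := by
    calc (4:ℕ) = 2^2 := by norm_num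
    _ ≤ 2^h := Nat.pow_le_pow_right (by norm_num) hh
  have hn3 : 3 ≤ treeSize 2 h := by omega
  have hrange : desc 0 h ⊆ Finset.range (treeSize 2 h) := by
    rw [hn]; exact desc_zero_subset
  have hz0 : dwt (c 0) 0 h = 0 := Finset.sum_eq_zero (fun j _ => pw_empty hem0 j)
  have hzT : dwt (c T) 0 h = 0 := Finset.sum_eq_zero (fun j _ => pw_empty hemT j)
  have hleaf : 2*0+1 < treeSize 2 h := by omega
  have hevent : ∃ aevt, aevt ≤ T ∧ bwcovered 2 (c aevt) 0 := by
    rcases pw_one_cases hpw with hb | hw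
    · have hb0 : (c 0 0).1 = false := by rw [hem0 0]
      obtain ⟨m, hm1, hm2, _, hcov, _, _⟩ := black_origin hmv (Nat.zero_le _) ht₀ hb0 hb hleaf
      exact ⟨m, by omega, hcov⟩
    · have hwT : (c T 0).2 = false := by rw [hemT 0]
      obtain ⟨m, hm1, hm2, hcov, _⟩ := white_end hmv ht₀ le_rfl hw hwT
      exact ⟨m, by omega, hcov⟩
  obtain ⟨aevt, haT, hcov⟩ := hevent
  obtain ⟨τ, hτ1, hτ2, hτ3⟩ := main_lemma hmv h hh 0 0 T aevt (Nat.zero_le _) haT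
    le_rfl hrange hz0 hzT hcov
  refine ⟨τ, hτ2, ?_⟩
  have hle : dwt (c τ) 0 h ≤ bwweight (treeSize 2 h) (c τ) :=
    Finset.sum_le_sum_of_subset hrange
  omega
end

section
/- In any whole black-white pebbling of the balanced binary tree of height 3 that starts and ends with no pebbles and pebbles the root at some time, there is a time at which the total pebble weight is at least 3. -/
lemma exists_change_forward {P : ℕ → Prop} {v w : ℕ} (hvw : v ≤ w) (hv : P v) (hw : ¬ P w) :
    ∃ u, v ≤ u ∧ u < w ∧ P u ∧ ¬ P (u+1) := by
  by_contra hcon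
  push_neg at hcon
  apply hw
  have key : ∀ k, v + k ≤ w → P (v + k) := by
    intro k
    induction k with
    | zero => intro _; simpa using hv
    | succ n ih =>
      intro h
      have h1 : v + n ≤ w := by omega
      have h2 := hcon (v + n) (by omega) (by omega) (ih h1)
      exact h2
  have := key (w - v) (by omega)
  rwa [Nat.add_sub_cancel' hvw] at this

lemma exists_change_backward {Q : ℕ → Prop} {u : ℕ} (hu : Q u) (h0 : ¬ Q 0) :
    ∃ s, s < u ∧ ¬ Q s ∧ ∀ x, s < x → x ≤ u → Q x := by
  classical
  have hS : ∃ m, m ≤ u ∧ ∀ y, m ≤ y → y ≤ u → Q y :=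
    ⟨u, le_refl _, fun y h1 h2 => by
      have h3 : y = u := le_antisymm h2 h1
      rw [h3]; exact hu⟩
  obtain ⟨hmu, hmQ⟩ := Nat.find_spec hS
  set m := Nat.find hS with hm
  have hm0 : m ≠ 0 := by
    intro h
    exact h0 (hmQ 0 (by omega) (by omega))
  have hmin := Nat.find_min hS (show m - 1 < m by omega)
  push_neg at hmin
  refine ⟨m - 1, by omega, ?_, fun x hx1 hx2 => hmQ x (by omega) hx2⟩
  obtain ⟨y, hy1, hy2, hy3⟩ := hmin (by omega)
  have hy : y = m - 1 := by
    by_contra hne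
    exact hy3 (hmQ y (by omega) hy2)
  rwa [hy] at hy3

lemma cov_pw {cfg : BWCfg} {a : ℕ} (h : bwcovered 2 cfg a) :
    bwpw cfg (2*a+1) = 1 ∧ bwpw cfg (2*a+2) = 1 :=
  ⟨h _ ⟨0, by omega, by omega⟩, h _ ⟨1, by omega, by omega⟩⟩

lemma pw_black {cfg : BWCfg} {k : ℕ} (h : (cfg k).1 = true) : 1 ≤ bwpw cfg k := by
  simp [bwpw, h]

lemma pw_white {cfg : BWCfg} {k : ℕ} (h : (cfg k).2 = true) : 1 ≤ bwpw cfg k := by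
  rcases hb : (cfg k).1 <;> simp [bwpw, h, hb]

lemma pw_eq_one {cfg : BWCfg} {k : ℕ} (h : bwpw cfg k = 1) :
    (cfg k).1 = true ∨ (cfg k).2 = true := by
  rcases hb : (cfg k).1 <;> rcases hw : (cfg k).2 <;> simp_all [bwpw]

lemma white_off {c c' : BWCfg} (h : BWMove 2 7 c c') {k : ℕ}
    (h1 : (c k).2 = true) (h2 : (c' k).2 = false) : bwcovered 2 c k := by
  rcases h with ⟨i, hi⟩ | ⟨i, hin, hcov, hme, hch, hoth⟩ | ⟨i, hin, hi⟩ | ⟨i, hleaf, hi⟩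
  · exfalso
    by_cases hk : k = i
    · subst hk; rw [hi, Function.update_self] at h2; simp_all
    · rw [hi, Function.update_of_ne hk] at h2; simp_all
  · by_cases hk : k = i
    · subst hk; exact hcov
    · exfalso
      by_cases hck : child 2 i k
      · rcases hch k hck with he | he <;> rw [he] at h2 <;> simp_all
      · rw [hoth k hk hck] at h2; simp_all
  · exfalso
    by_cases hk : k = i
    · subst hk; rw [hi, Function.update_self] at h2; simp_all
    · rw [hi, Function.update_of_ne hk] at h2; simp_all
  · exfalso
    by_cases hk : k = i
    · subst hk; rw [hi, Function.update_self] at h2; simp_all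
    · rw [hi, Function.update_of_ne hk] at h2; simp_all

lemma black_on {c c' : BWCfg} (h : BWMove 2 7 c c') {k : ℕ} (hk0 : ¬ isLeaf 2 7 k)
    (h1 : (c k).1 = false) (h2 : (c' k).1 = true) : bwcovered 2 c k := by
  rcases h with ⟨i, hi⟩ | ⟨i, hin, hcov, hme, hch, hoth⟩ | ⟨i, hin, hi⟩ | ⟨i, hleaf, hi⟩
  · exfalso
    by_cases hk : k = i
    · subst hk; rw [hi, Function.update_self] at h2; simp_all
    · rw [hi, Function.update_of_ne hk] at h2; simp_all
  · by_cases hk : k = i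
    · subst hk; exact hcov
    · exfalso
      by_cases hck : child 2 i k
      · rcases hch k hck with he | he <;> rw [he] at h2 <;> simp_all
      · rw [hoth k hk hck] at h2; simp_all
  · exfalso
    by_cases hk : k = i
    · subst hk; rw [hi, Function.update_self] at h2; simp_all
    · rw [hi, Function.update_of_ne hk] at h2; simp_all
  · exfalso
    by_cases hk : k = i
    · subst hk; exact hk0 hleaf
    · rw [hi, Function.update_of_ne hk] at h2; simp_all

lemma black_on_ne {c c' : BWCfg} (h : BWMove 2 7 c c') {k l : ℕ} (hkl : k ≠ l)
    (h1 : (c k).1 = false) (h2 : (c' k).1 = true)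
    (h3 : (c l).1 = false) (h4 : (c' l).1 = true) : False := by
  rcases h with ⟨i, hi⟩ | ⟨i, hin, hcov, hme, hch, hoth⟩ | ⟨i, hin, hi⟩ | ⟨i, hleaf, hi⟩
  · by_cases hk : k = i
    · subst hk; rw [hi, Function.update_self] at h2; simp_all
    · rw [hi, Function.update_of_ne hk] at h2; simp_all
  · have hki : k = i := by
      by_contra hk
      by_cases hck : child 2 i k
      · rcases hch k hck with he | he <;> rw [he] at h2 <;> simp_all
      · rw [hoth k hk hck] at h2; simp_all
    have hli : l = i := by
      by_contra hl
      by_cases hcl : child 2 i l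
      · rcases hch l hcl with he | he <;> rw [he] at h4 <;> simp_all
      · rw [hoth l hl hcl] at h4; simp_all
    exact hkl (hki.trans hli.symm)
  · by_cases hk : k = i
    · subst hk; rw [hi, Function.update_self] at h2; simp_all
    · rw [hi, Function.update_of_ne hk] at h2; simp_all
  · have hki : k = i := by
      by_contra hk
      rw [hi, Function.update_of_ne hk] at h2; simp_all
    have hli : l = i := by
      by_contra hl
      rw [hi, Function.update_of_ne hl] at h4; simp_all
    exact hkl (hki.trans hli.symm)

lemma bwweight7 (cfg : BWCfg) : bwweight 7 cfg = bwpw cfg 0 + bwpw cfg 1 + bwpw cfg 2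
    + bwpw cfg 3 + bwpw cfg 4 + bwpw cfg 5 + bwpw cfg 6 := by
  simp [bwweight, Finset.sum_range_succ]

/-- every whole black-white root-pebbling of the binary tree of
height 3 uses total pebble weight at least 3 at some time. -/
theorem bw_lower_height3 (T : ℕ) (c : ℕ → BWCfg)
    (hp : BWRootPebbling 2 (treeSize 2 3) T c) :
    ∃ t, t ≤ T ∧ 3 ≤ bwweight (treeSize 2 3) (c t) := by
  obtain ⟨⟨hvalid, hmove⟩, h0, hT, t0, ht0T, hroot⟩ := hp
  have hn : treeSize 2 3 = 7 := by decide
  rw [hn] at hmove ⊢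
  by_contra hcon
  push_neg at hcon
  -- hcon : ∀ t, t ≤ T → bwweight 7 (c t) < 3
  -- Generic contradiction from a white pebble on node a ∈ {0,1,2} at time v ≤ T.
  have whiteCase : ∀ a v : ℕ, (a = 0 ∨ a = 1 ∨ a = 2) → v ≤ T → (c v a).2 = true → False := by
    intro a v ha hvT hw
    have hTw : ¬ (c T a).2 = true := by rw [hT a]; simp
    obtain ⟨u, hvu, huT, hu, hu1⟩ :=
      exists_change_forward (P := fun t => (c t a).2 = true) hvT hw hTw
    have hcov := white_off (hmove u huT) hu (by simpa using hu1)
    obtain ⟨h5, h6⟩ := cov_pw hcov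
    have hpa : 1 ≤ bwpw (c u) a := pw_white hu
    have hlt := hcon u (le_of_lt huT)
    rw [bwweight7] at hlt
    rcases ha with rfl | rfl | rfl <;> simp_all <;> omega
  -- Generic: node a ∈ {0,1,2} black at time s ≤ T: find the black-placement time.
  have blackChild : ∀ a s : ℕ, (a = 0 ∨ a = 1 ∨ a = 2) → s ≤ T → (c s a).1 = true →
      ∃ sa, sa < s ∧ (c sa a).1 = false ∧ bwcovered 2 (c sa) a ∧
        (c (sa+1) a).1 = true ∧ ∀ x, sa < x → x ≤ s → (c x a).1 = true := by
    intro a s ha hsT hb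
    have h0a : ¬ (c 0 a).1 = true := by rw [h0 a]; simp
    obtain ⟨sa, hsa, hsaQ, hall⟩ :=
      exists_change_backward (Q := fun x => (c x a).1 = true) hb h0a
    have hsa1 : (c (sa+1) a).1 = true := hall (sa+1) (by omega) (by omega)
    have hleaf : ¬ isLeaf 2 7 a := by rcases ha with rfl | rfl | rfl <;> (rintro ⟨-, h⟩; omega)
    have hcov := black_on (hmove sa (by omega)) hleaf (by simpa using hsaQ) hsa1
    exact ⟨sa, hsa, by simpa using hsaQ, hcov, hsa1, hall⟩
  -- Case on root pebble color at time t0.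
  rcases pw_eq_one hroot with hrb | hrw
  · -- root black at t0: trace back to its placement at time s
    obtain ⟨s, hs, _, hcov, _, _⟩ := blackChild 0 t0 (by left; rfl) ht0T hrb
    obtain ⟨hp1, hp2⟩ := cov_pw hcov
    have hsT : s ≤ T := by omega
    -- children 1 and 2 each have weight 1 at time s
    rcases pw_eq_one (by simpa using hp1) with hb1 | hw1
    · rcases pw_eq_one (by simpa using hp2) with hb2 | hw2
      · -- both children black at time s: trace back both placements
        obtain ⟨s1, hs1, hf1, hcov1, hg1, hall1⟩ :=
          blackChild 1 s (by right; left; rfl) hsT hb1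
        obtain ⟨s2, hs2, hf2, hcov2, hg2, hall2⟩ :=
          blackChild 2 s (by right; right; rfl) hsT hb2
        have hne : s1 ≠ s2 := by
          intro h
          subst h
          exact black_on_ne (hmove s1 (by omega)) (show (1:ℕ) ≠ 2 by decide) hf1 hg1 hf2 hg2
        rcases lt_or_gt_of_ne hne with hlt | hlt
        · -- s1 < s2 : at time s2, node 1 is black and children of 2 covered
          obtain ⟨h5, h6⟩ := cov_pw hcov2
          have hb1s2 : (c s2 1).1 = true := hall1 s2 hlt (by omega)
          have hpw1 : 1 ≤ bwpw (c s2) 1 := pw_black hb1s2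
          have hlt3 := hcon s2 (by omega)
          rw [bwweight7] at hlt3
          simp_all
          omega
        · obtain ⟨h3, h4⟩ := cov_pw hcov1
          have hb2s1 : (c s1 2).1 = true := hall2 s1 hlt (by omega)
          have hpw2 : 1 ≤ bwpw (c s1) 2 := pw_black hb2s1
          have hlt3 := hcon s1 (by omega)
          rw [bwweight7] at hlt3
          simp_all
          omega
      · exact (whiteCase 2 s (by right; right; rfl) hsT hw2).elim
    · exact (whiteCase 1 s (by right; left; rfl) hsT hw1).elim
  · exact (whiteCase 0 t0 (by left; rfl) ht0T hrw).elim
end
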